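/- arXiv:2104.09004 — 4 statements merged into one kernel-verified Lean document; each statement's English description precedes it below -/
import Mathlib

section
/- If X is an IR(G)-set of a finite simple graph G, then any flip-set of X is also an IR(G)-set. Moreover, if X' is the flip-set of X using Y', and y' ∈ Y' belongs to EPN(y, X), then y ∈ EPN(y', X'). -/
open SimpleGraph

section IRDefs

variable {V : Type*}

/-- `w` is a `D`-private neighbour of `v`: `w` is dominated by `v` but by no other
vertex of `D`. -/
def IsPrivateNbr (G : SimpleGraph V) (D : Set V) (v w : V) : Prop :=
  (w = v ∨ G.Adj v w) ∧ ∀ u ∈ D, u ≠ v → ¬(w = u ∨ G.Adj u w)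

/-- The set `PN(v, D)` of `D`-private neighbours of `v`. -/
def PN (G : SimpleGraph V) (v : V) (D : Set V) : Set V := {w | IsPrivateNbr G D v w}

/-- The set `EPN(v, D) = PN(v, D) − D` of external `D`-private neighbours of `v`. -/
def EPN (G : SimpleGraph V) (v : V) (D : Set V) : Set V := PN G v D \ D

/-- A set `D` is irredundant if every vertex of `D` has a `D`-private neighbour. -/
def Irredundant (G : SimpleGraph V) (D : Set V) : Prop := ∀ v ∈ D, (PN G v D).Nonempty

/-- The upper irredundance number `IR(G)`. -/
noncomputable def IRnum (G : SimpleGraph V) : ℕ :=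
  sSup {n | ∃ D : Set V, Irredundant G D ∧ D.ncard = n}

/-- An `IR(G)`-set: an irredundant set of maximum cardinality `IR(G)`. -/
def IsIRSet (G : SimpleGraph V) (D : Set V) : Prop :=
  Irredundant G D ∧ D.ncard = IRnum G

/-- The `IR`-graph of `G`: vertices are the `IR(G)`-sets, and `D` is adjacent to `D'`
iff `D' = (D − {u}) ∪ {v}` for some `u ∈ D` and `v ∈ D' − {u}` with `uv ∈ E(G)`. -/
def IRGraph (G : SimpleGraph V) [Fintype V] :
    SimpleGraph {D : Set V // IsIRSet G D} where
  Adj D D' := ∃ a b, a ∈ D.1 ∧ b ∈ D'.1 ∧ b ≠ a ∧ G.Adj a b ∧ D'.1 = (D.1 \ {a}) ∪ {b}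
  symm := by
    constructor
    rintro ⟨D, hD⟩ ⟨D', hD'⟩ ⟨a, b, ha, hb, hba, hadj, heq⟩
    dsimp only at ha hb heq ⊢
    have hbD : b ∉ D := by
      intro hbD
      have h1 : D' = D \ {a} := by
        rw [heq]
        ext x
        simp only [Set.mem_union, Set.mem_diff, Set.mem_singleton_iff]
        constructor
        · rintro (h | rfl)
          · exact h
          · exact ⟨hbD, hba⟩
        · exact Or.inl
      have h2 : D'.ncard = D.ncard - 1 := by
        rw [h1, Set.ncard_diff_singleton_of_mem ha]
      have h3 : D.ncard = D'.ncard := by rw [hD.2, hD'.2]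
      have h4 : 0 < D.ncard := (Set.ncard_pos (Set.toFinite D)).2 ⟨a, ha⟩
      omega
    refine ⟨b, a, hb, ha, fun h => hba h.symm, hadj.symm, ?_⟩
    rw [heq]
    ext x
    simp only [Set.mem_union, Set.mem_diff, Set.mem_singleton_iff]
    constructor
    · intro hx
      by_cases hxa : x = a
      · exact Or.inr hxa
      · have hxb : x ≠ b := fun h => hbD (h ▸ hx)
        exact Or.inl ⟨Or.inl ⟨hx, hxa⟩, hxb⟩
    · rintro (⟨(⟨hx, _⟩ | rfl), hxb⟩ | rfl)
      · exact hx
      · exact absurd rfl hxb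
      · exact ha
  loopless := by
    constructor
    rintro ⟨D, hD⟩ ⟨a, b, ha, hb, hba, hadj, heq⟩
    dsimp only at ha hb heq
    have h2 : a ∈ (D \ {a}) ∪ {b} := heq ▸ ha
    rcases h2 with h | h
    · exact h.2 rfl
    · exact hba h.symm

end IRDefs

/-- If `X` is an `IR(G)`-set, then so is any flip-set of `X`; moreover if
`y' ∈ Y'` belongs to `EPN(y, X)`, then `y ∈ EPN(y', X')` where `X'` is the
flip-set of `X` using `Y'`. -/
theorem statement8 {V : Type*} [Fintype V] (G : SimpleGraph V)
    (X Xepn Xiso : Set V) (hX : IsIRSet G X)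
    (hunion : Xepn ∪ Xiso = X) (hdisj : Disjoint Xepn Xiso)
    (hiso : ∀ y ∈ Xiso, ∀ z ∈ X, ¬ G.Adj y z)
    (f : V → V) (hf : ∀ y ∈ Xepn, f y ∈ EPN G y X) :
    IsIRSet G ((X \ Xepn) ∪ (f '' Xepn)) ∧
      ∀ y ∈ Xepn, y ∈ EPN G (f y) ((X \ Xepn) ∪ (f '' Xepn)) := by
  have hXisoX : Xiso ⊆ X := hunion ▸ Set.subset_union_right
  have hXepnX : Xepn ⊆ X := hunion ▸ Set.subset_union_left
  have hdiff : X \ Xepn = Xiso := by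
    rw [← hunion]
    ext x
    simp only [Set.mem_diff, Set.mem_union]
    constructor
    · rintro ⟨h | h, hn⟩
      · exact absurd h hn
      · exact h
    · intro hx
      exact ⟨Or.inr hx, fun hx' => hdisj.ne_of_mem hx' hx rfl⟩
  have hfnotX : ∀ y ∈ Xepn, f y ∉ X := fun y hy => (hf y hy).2
  have hfadj : ∀ y ∈ Xepn, G.Adj y (f y) := by
    intro y hy
    rcases (hf y hy).1.1 with h | h
    · exact absurd (h.symm ▸ hXepnX hy) (hfnotX y hy)
    · exact h
  have hfpriv : ∀ y ∈ Xepn, ∀ u ∈ X, u ≠ y → ¬(f y = u ∨ G.Adj u (f y)) :=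
    fun y hy => (hf y hy).1.2
  set X' := (X \ Xepn) ∪ (f '' Xepn) with hX'def
  have hX'eq : X' = Xiso ∪ f '' Xepn := by rw [hX'def, hdiff]
  -- key : second conjunct
  have key : ∀ y ∈ Xepn, y ∈ EPN G (f y) X' := by
    intro y hy
    have hyX : y ∈ X := hXepnX hy
    refine ⟨⟨Or.inr (hfadj y hy).symm, ?_⟩, ?_⟩
    · intro u hu hune
      rw [hX'eq] at hu
      rcases hu with hu | ⟨z, hz, rfl⟩
      · rintro (rfl | hadj)
        · exact hdisj.ne_of_mem hy hu rfl
        · exact hiso u hu y hyX hadj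
      · have hzy : y ≠ z := by
          rintro rfl; exact hune rfl
        have := hfpriv z hz y hyX hzy
        rintro (h | hadj)
        · exact this (Or.inl h.symm)
        · exact this (Or.inr hadj.symm)
    · rw [hX'eq]
      rintro (h | ⟨z, hz, hzy⟩)
      · exact hdisj.ne_of_mem hy h rfl
      · exact hfnotX z hz (hzy.symm ▸ hyX)
  -- irredundance
  have hirr : Irredundant G X' := by
    intro v hv
    rw [hX'eq] at hv
    rcases hv with hv | ⟨z, hz, rfl⟩
    · refine ⟨v, Or.inl rfl, ?_⟩
      intro u hu hune
      rw [hX'eq] at hu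
      rcases hu with hu | ⟨z, hz, rfl⟩
      · rintro (h | hadj)
        · exact hune h.symm
        · exact hiso u hu v (hXisoX hv) hadj
      · have hvz : v ≠ z := fun h => hdisj.ne_of_mem hz hv h.symm
        have := hfpriv z hz v (hXisoX hv) hvz
        rintro (h | hadj)
        · exact this (Or.inl h.symm)
        · exact this (Or.inr hadj.symm)
    · exact ⟨z, (key z hz).1⟩
  -- injectivity of f on Xepn
  have hinj : Set.InjOn f Xepn := by
    intro y hy z hz hfe
    by_contra hne
    have := hfpriv y hy z (hXepnX hz) (fun h => hne h.symm)
    exact this (Or.inr (hfe ▸ (hfadj z hz)))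
  -- disjointness of Xiso and image
  have hdisj2 : Disjoint Xiso (f '' Xepn) := by
    rw [Set.disjoint_right]
    rintro x ⟨z, hz, rfl⟩ hx
    exact hfnotX z hz (hXisoX hx)
  have hcard : X'.ncard = X.ncard := by
    rw [hX'eq, Set.ncard_union_eq hdisj2 (Set.toFinite _) (Set.toFinite _),
      Set.ncard_image_of_injOn hinj, ← hunion,
      Set.ncard_union_eq hdisj (Set.toFinite _) (Set.toFinite _), Nat.add_comm]
  exact ⟨⟨hirr, hcard ▸ hX.2⟩, key⟩
end

section
/- Let G be a finite simple graph whose IR-graph H is connected, and let X be an IR(G)-set that contains k ≥ 3 vertices each of which has positive degree in the induced subgraph G[X] or has an X-external private neighbour. Then the diameter of H is at least k. -/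
open SimpleGraph

section Aux

variable {V : Type*} [Fintype V] {G : SimpleGraph V}

/-- Along any walk in the IR-graph, the number of vertices of the start set missing
from the end set is at most the length of the walk. -/
lemma ncard_diff_le_walk_length {D D' : {D : Set V // IsIRSet G D}}
    (p : (IRGraph G).Walk D D') : (D.1 \ D'.1).ncard ≤ p.length := by
  induction p with
  | nil => simp
  | @cons D E F h p ih =>
    obtain ⟨a, b, ha, hb, hba, hadj, heq⟩ := h
    have hsub : D.1 \ F.1 ⊆ (E.1 \ F.1) ∪ {a} := by
      rintro x ⟨hxD, hxF⟩
      by_cases hxa : x = a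
      · exact Or.inr hxa
      · exact Or.inl ⟨heq ▸ Or.inl ⟨hxD, hxa⟩, hxF⟩
    have hle : (D.1 \ F.1).ncard ≤ p.length + 1 := by
      calc (D.1 \ F.1).ncard ≤ ((E.1 \ F.1) ∪ {a}).ncard :=
            Set.ncard_le_ncard hsub (Set.toFinite _)
        _ ≤ (E.1 \ F.1).ncard + ({a} : Set V).ncard := Set.ncard_union_le _ _
        _ ≤ p.length + 1 := by rw [Set.ncard_singleton]; omega
    show _ ≤ p.length + 1
    simpa [SimpleGraph.Walk.length_cons] using hle

/-- Main construction: from an IR-set `X`, simultaneously swapping every vertex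
having an external private neighbour to such a neighbour gives another IR-set `Y`
with all those vertices in `X \ Y`. -/
lemma exists_far_IRSet {X : Set V} (hX : IsIRSet G X) :
    ∃ Y : Set V, IsIRSet G Y ∧ {x | x ∈ X ∧ (EPN G x X).Nonempty} ⊆ X \ Y := by
  classical
  set Sf : Set V := {x | x ∈ X ∧ (EPN G x X).Nonempty} with hSf
  have hSfX : Sf ⊆ X := fun x hx => hx.1
  have hchoice : ∀ s, ∃ w, s ∈ Sf → w ∈ EPN G s X := by
    intro s
    by_cases h : s ∈ Sf
    · exact h.2.imp fun w hw _ => hw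
    · exact ⟨s, fun h' => absurd h' h⟩
  choose f hf using hchoice
  -- basic facts about f
  have hfnX : ∀ s ∈ Sf, f s ∉ X := fun s hs => (hf s hs).2
  have hfpriv : ∀ s ∈ Sf, ∀ u ∈ X, u ≠ s → ¬(f s = u ∨ G.Adj u (f s)) :=
    fun s hs => (hf s hs).1.2
  have hfadj : ∀ s ∈ Sf, G.Adj s (f s) := by
    intro s hs
    rcases (hf s hs).1.1 with h | h
    · exact absurd (by rw [h]; exact hSfX hs : f s ∈ X) (hfnX s hs)
    · exact h
  -- each x ∈ X \ Sf is its own X-private neighbour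
  have hself : ∀ x ∈ X, x ∉ Sf → ∀ u ∈ X, u ≠ x → ¬(x = u ∨ G.Adj u x) := by
    intro x hxX hxSf
    obtain ⟨w, hw⟩ := hX.1 x hxX
    have hwx : w = x := by
      by_contra hne
      have hwX : w ∉ X := by
        intro hwX
        exact hw.2 w hwX hne (Or.inl rfl)
      exact hxSf ⟨hxX, ⟨w, hw, hwX⟩⟩
    exact hwx ▸ hw.2
  set Y : Set V := (X \ Sf) ∪ (f '' Sf) with hY
  -- injectivity of f on Sf
  have hinj : Set.InjOn f Sf := by
    intro s hs t ht hst
    by_contra hne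
    exact hfpriv t ht s (hSfX hs) hne (Or.inr (hst ▸ hfadj s hs))
  -- Sf ∩ Y = ∅, more precisely Sf ⊆ X \ Y
  have hSfY : Sf ⊆ X \ Y := by
    intro s hs
    refine ⟨hSfX hs, ?_⟩
    rintro (⟨-, hsSf⟩ | ⟨t, ht, hts⟩)
    · exact hsSf hs
    · exact hfnX t ht (by rw [hts]; exact hSfX hs)
  -- Y is irredundant
  have hirr : Irredundant G Y := by
    rintro y (⟨hyX, hySf⟩ | ⟨s, hs, rfl⟩)
    · -- y is its own Y-private neighbour
      refine ⟨y, Or.inl rfl, ?_⟩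
      rintro u hu hne hdom
      rcases hu with ⟨huX, -⟩ | ⟨t, ht, rfl⟩
      · exact hself y hyX hySf u huX hne hdom
      · rcases hdom with h | h
        · exact hfnX t ht (h ▸ hyX)
        · have hyt : y ≠ t := fun h' => hySf (h' ▸ ht)
          exact hfpriv t ht y hyX hyt (Or.inr h.symm)
    · -- s is a Y-private neighbour of f s
      refine ⟨s, Or.inr (hfadj s hs).symm, ?_⟩
      rintro u hu hne hdom
      rcases hu with ⟨huX, huSf⟩ | ⟨t, ht, rfl⟩
      · rcases hdom with h | h
        · exact huSf (h ▸ hs)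
        · have hus : u ≠ s := fun h' => huSf (h' ▸ hs)
          exact hself u huX huSf s (hSfX hs) (fun h' => hus h'.symm)
            (Or.inr h.symm)
      · have hts : t ≠ s := fun h' => hne (h' ▸ rfl)
        rcases hdom with h | h
        · exact hfnX t ht (h ▸ hSfX hs)
        · exact hfpriv t ht s (hSfX hs) hts.symm (Or.inr h.symm)
  -- Y has the same cardinality as X
  have hdisj : Disjoint (X \ Sf) (f '' Sf) := by
    rw [Set.disjoint_left]
    rintro x ⟨hxX, -⟩ ⟨t, ht, rfl⟩
    exact hfnX t ht hxX
  have hcard : Y.ncard = X.ncard := by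
    rw [hY, Set.ncard_union_eq hdisj (Set.toFinite _) (Set.toFinite _),
      Set.ncard_image_of_injOn hinj,
      Set.ncard_diff_add_ncard_of_subset hSfX (Set.toFinite _)]
  exact ⟨Y, ⟨hirr, hcard ▸ hX.2⟩, hSfY⟩

end Aux

/-- If the `IR`-graph of `G` is connected and `X` is an `IR(G)`-set containing
`k ≥ 3` vertices each of positive degree in `G[X]` or with an `X`-external
private neighbour, then the diameter of the `IR`-graph is at least `k`. -/
theorem statement11 {V : Type*} [Fintype V] (G : SimpleGraph V)
    (hconn : (IRGraph G).Connected) (X : Set V) (hX : IsIRSet G X)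
    (k : ℕ) (hk : 3 ≤ k) (S : Set V) (hSX : S ⊆ X) (hScard : S.ncard = k)
    (hS : ∀ s ∈ S, (∃ t ∈ X, G.Adj s t) ∨ (EPN G s X).Nonempty) :
    k ≤ (IRGraph G).diam := by
  classical
  -- Every s ∈ S has an external private neighbour
  have hSepn : S ⊆ {x | x ∈ X ∧ (EPN G x X).Nonempty} := by
    intro s hs
    refine ⟨hSX hs, ?_⟩
    rcases hS s hs with ⟨t, htX, hadj⟩ | h
    · obtain ⟨w, hw⟩ := hX.1 s (hSX hs)
      refine ⟨w, hw, ?_⟩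
      intro hwX
      by_cases hws : w = s
      · exact hw.2 t htX hadj.ne' (Or.inr (hws ▸ hadj.symm))
      · exact hw.2 w hwX hws (Or.inl rfl)
    · exact h
  obtain ⟨Y, hY, hYfar⟩ := exists_far_IRSet hX
  have hkle : k ≤ (X \ Y).ncard := by
    rw [← hScard]
    exact Set.ncard_le_ncard (fun s hs => hYfar (hSepn hs)) (Set.toFinite _)
  set DX : {D : Set V // IsIRSet G D} := ⟨X, hX⟩
  set DY : {D : Set V // IsIRSet G D} := ⟨Y, hY⟩
  have hreach : (IRGraph G).Reachable DX DY := hconn DX DY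
  obtain ⟨p, hp⟩ := hreach.exists_walk_length_eq_dist
  have hdist : k ≤ (IRGraph G).dist DX DY := by
    rw [← hp]
    exact hkle.trans (ncard_diff_le_walk_length p)
  refine hdist.trans (SimpleGraph.dist_le_diam ?_)
  haveI : Finite (Set V) := inferInstance
  haveI : Finite {D : Set V // IsIRSet G D} := Subtype.finite
  haveI : Nonempty {D : Set V // IsIRSet G D} := ⟨DX⟩
  obtain ⟨u, v, huv⟩ := SimpleGraph.exists_edist_eq_ediam_of_finite (G := IRGraph G)
  exact huv ▸ SimpleGraph.edist_ne_top_iff_reachable.2 (hconn u v)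
end

section
/- Let H be the IR-graph of a finite simple graph G, suppose H is a tree with diameter 3, and let X = {x_1,...,x_r} be an IR(G)-set in which exactly the three vertices x_1, x_2, x_3 have positive degree in G[X]. For i = 1,2,3 let x_i' ∈ EPN(x_i, X), let X' be the flip-set of X using {x_1', x_2', x_3'}, and assume that P: (X, X_1, X_2, X') with X_1 = {x_1', x_2, ..., x_r} and X_2 = {x_1', x_2', x_3, ..., x_r} is an X–X' geodesic in H. Then: (i) the induced subgraph G[{x_1, x_2, x_3, x_1', x_2', x_3'}] has edge set exactly {x_1x_2, x_1x_3, x_1x_1', x_2x_2', x_3x_3', x_1'x_3', x_2'x_3'}; in particular X_1 and X_2 are independent; (ii) the set U = {x_1, x_1', x_2, x_4, ..., x_r} is an IR(G)-set with x_3 ∈ EPN(x_1, U), x_3' ∈ EPN(x_1', U) and x_2' ∈ EPN(x_2, U); (iii) writing U' = {x_2', x_3', x_3, x_4, ..., x_r} for the flip-set of U using {x_3, x_3', x_2'}, the subgraph of H induced by {X, X_1, X_2, X', U, U'} is the double star S(2,2), in which X_1 and X_2 are the adjacent central vertices, X and U are leaves adjacent to X_1, and X' and U' are leaves adjacent to X_2.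 -/
open SimpleGraph

/-- The double star `S(a,b)`: adjacent centres `Sum.inl false` (with `a` leaves) and
`Sum.inl true` (with `b` leaves). -/
def doubleStar (a b : ℕ) : SimpleGraph (Bool ⊕ (Fin a ⊕ Fin b)) :=
  SimpleGraph.fromRel (fun x y =>
    (x = Sum.inl false ∧ y = Sum.inl true) ∨
    (∃ i, x = Sum.inl false ∧ y = Sum.inr (Sum.inl i)) ∨
    (∃ j, x = Sum.inl true ∧ y = Sum.inr (Sum.inr j)))

open SimpleGraph

section TreeAux

variable {W : Type*} {H : SimpleGraph W}

lemma tree_unique_path (ht : H.IsTree) {u v : W} {p q : H.Walk u v}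
    (hp : p.IsPath) (hq : q.IsPath) : p = q :=
  ((ht.existsUnique_path u v).unique hp hq)

lemma tree_dist_eq (ht : H.IsTree) {u v : W} {p : H.Walk u v} (hp : p.IsPath) :
    H.dist u v = p.length := by
  classical
  obtain ⟨q, hq⟩ := (ht.isConnected u v).exists_walk_length_eq_dist
  have hb : q.bypass.IsPath := q.bypass_isPath
  have heq := tree_unique_path ht hp hb
  have h1 : H.dist u v ≤ p.length := SimpleGraph.dist_le p
  have h2 : p.length ≤ H.dist u v := by
    rw [heq, ← hq]; exact q.length_bypass_le
  omega

lemma path3_isPath {a b c d : W} (hab : H.Adj a b) (hbc : H.Adj b c) (hcd : H.Adj c d)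
    (hac : a ≠ c) (had : a ≠ d) (hbd : b ≠ d) :
    (Walk.cons hab (Walk.cons hbc (Walk.cons hcd Walk.nil)) : H.Walk a d).IsPath := by
  refine Walk.IsPath.cons (Walk.IsPath.cons (Walk.IsPath.cons (Walk.IsPath.nil) ?_) ?_) ?_ <;>
    simp only [Walk.support_cons, Walk.support_nil, List.mem_cons, List.mem_singleton,
      List.not_mem_nil] <;> push_neg
  · exact ⟨hcd.ne, trivial⟩
  · exact ⟨hbc.ne, hbd, trivial⟩
  · exact ⟨hab.ne, hac, had, trivial⟩

lemma path2_isPath {a b c : W} (hab : H.Adj a b) (hbc : H.Adj b c) (hac : a ≠ c) :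
    (Walk.cons hab (Walk.cons hbc Walk.nil) : H.Walk a c).IsPath := by
  refine Walk.IsPath.cons (Walk.IsPath.cons (Walk.IsPath.nil) ?_) ?_ <;>
    simp only [Walk.support_cons, Walk.support_nil, List.mem_cons, List.mem_singleton,
      List.not_mem_nil] <;> push_neg
  · exact ⟨hbc.ne, trivial⟩
  · exact ⟨hab.ne, hac, trivial⟩

/-- In a tree with all distances ≤ 3, if `a-b-c-d` is a geodesic of length 3,
then the only neighbour of `a` is `b`. -/
lemma tree_leaf (ht : H.IsTree) {a b c d : W}
    (hab : H.Adj a b) (hbc : H.Adj b c) (hcd : H.Adj c d)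
    (hd3 : H.dist a d = 3) (hdiam : ∀ u v : W, H.dist u v ≤ 3)
    {e : W} (hea : H.Adj e a) : e = b := by
  classical
  have hadne : a ≠ d := by
    intro h; rw [h, SimpleGraph.dist_self] at hd3; omega
  have hbd : b ≠ d := by
    intro h
    have h2 := SimpleGraph.dist_le (Walk.cons (h ▸ hab) Walk.nil : H.Walk a d)
    simp only [Walk.length_cons, Walk.length_nil] at h2; omega
  have hac : a ≠ c := by
    intro h
    have h2 := SimpleGraph.dist_le (Walk.cons (h ▸ hcd) Walk.nil : H.Walk a d)
    simp only [Walk.length_cons, Walk.length_nil] at h2; omega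
  have hp0 : (Walk.cons hab (Walk.cons hbc (Walk.cons hcd Walk.nil)) : H.Walk a d).IsPath :=
    path3_isPath hab hbc hcd hac hadne hbd
  obtain ⟨q0, hq0len⟩ := (ht.isConnected e d).exists_walk_length_eq_dist
  set q := q0.bypass with hqdef
  have hq : q.IsPath := q0.bypass_isPath
  have hqlen : q.length ≤ 3 := le_trans q0.length_bypass_le (by rw [hq0len]; exact hdiam e d)
  by_cases hmem : a ∈ q.support
  · exfalso
    have hspec := q.take_spec hmem
    have hlen : (q.takeUntil a hmem).length + (q.dropUntil a hmem).length = q.length := by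
      conv_rhs => rw [← hspec]
      rw [Walk.length_append]
    have htu : (q.takeUntil a hmem).length ≠ 0 := by
      intro h0
      exact hea.ne (Walk.eq_of_length_eq_zero h0)
    have hdd : H.dist a d ≤ (q.dropUntil a hmem).length := SimpleGraph.dist_le _
    omega
  · have hcons : (Walk.cons hea.symm q).IsPath := by
      rw [Walk.cons_isPath_iff]; exact ⟨hq, hmem⟩
    have heq := tree_unique_path ht hcons hp0
    have hsupp := congrArg Walk.support heq
    simp only [Walk.support_cons, Walk.support_nil] at hsupp
    have h2 : q.support = [b, c, d] := by injection hsupp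
    have h1 : q.support = e :: q.support.tail := q.support_eq_cons
    rw [h2] at h1
    injection h1 with h1 _
    exact h1.symm

/-- uniqueness of 2-paths in a tree -/
lemma tree_two_path (ht : H.IsTree) {a b c d : W}
    (hab : H.Adj a b) (hbc : H.Adj b c) (had : H.Adj a d) (hdc : H.Adj d c)
    (hac : a ≠ c) : b = d := by
  have heq := tree_unique_path ht (path2_isPath hab hbc hac) (path2_isPath had hdc hac)
  have hsupp := congrArg Walk.support heq
  simp only [Walk.support_cons, Walk.support_nil, List.cons.injEq] at hsupp
  exact hsupp.2.1

end TreeAux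
section SetAux
variable {V : Type*} (G : SimpleGraph V)

lemma pn_self {D : Set V} {v : V} (h : ∀ u ∈ D, u ≠ v → ¬ G.Adj u v) :
    v ∈ PN G v D := by
  refine ⟨Or.inl rfl, fun u hu huv hc => ?_⟩
  rcases hc with hc | hc
  · exact huv hc.symm
  · exact h u hu huv hc

lemma pn_ext {D : Set V} {v w : V} (hadj : G.Adj v w)
    (h : ∀ u ∈ D, u ≠ v → w ≠ u ∧ ¬ G.Adj u w) : w ∈ PN G v D := by
  refine ⟨Or.inr hadj, fun u hu huv hc => ?_⟩
  rcases hc with hc | hc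
  · exact (h u hu huv).1 hc
  · exact (h u hu huv).2 hc

lemma swap_ncard [Fintype V] {X : Set V} {a b : V} (ha : a ∈ X) (hb : b ∉ X) :
    ((X \ {a}) ∪ {b}).ncard = X.ncard := by
  have hfin : (X \ {a}).Finite := Set.toFinite _
  have h1 : (X \ {a}) ∪ {b} = insert b (X \ {a}) := by
    rw [Set.union_singleton]
  rw [h1, Set.ncard_insert_of_notMem (fun hc => hb hc.1) hfin,
    Set.ncard_diff_singleton_of_mem ha]
  have : 0 < X.ncard := Set.ncard_pos (Set.toFinite X) |>.2 ⟨a, ha⟩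
  omega

lemma isIRSet_of {X D : Set V} (hX : IsIRSet G X) (hD : Irredundant G D)
    (hcard : D.ncard = X.ncard) : IsIRSet G D := ⟨hD, hcard.trans hX.2⟩

end SetAux

section TreeAux2
variable {W : Type*} {H : SimpleGraph W}

lemma tree_place (ht : H.IsTree) {a b c d : W}
    (hab : H.Adj a b) (hbc : H.Adj b c) (hcd : H.Adj c d)
    (hd3 : H.dist a d = 3) (hdiam : ∀ u v : W, H.dist u v ≤ 3) :
    ∀ e : W, e = b ∨ e = c ∨ H.Adj e b ∨ H.Adj e c := by
  intro e
  have hadne : a ≠ d := by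
    intro h; rw [h, SimpleGraph.dist_self] at hd3; omega
  have hbd : b ≠ d := by
    intro h
    have h2 := SimpleGraph.dist_le (Walk.cons (h ▸ hab) Walk.nil : H.Walk a d)
    simp only [Walk.length_cons, Walk.length_nil] at h2; omega
  have hac : a ≠ c := by
    intro h
    have h2 := SimpleGraph.dist_le (Walk.cons (h ▸ hcd) Walk.nil : H.Walk a d)
    simp only [Walk.length_cons, Walk.length_nil] at h2; omega
  have leafd : ∀ f : W, H.Adj f d → f = c :=
    fun f hf => tree_leaf ht hcd.symm hbc.symm hab.symm
      (by rw [SimpleGraph.dist_comm]; exact hd3) hdiam hf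
  have leafa : ∀ f : W, H.Adj f a → f = b :=
    fun f hf => tree_leaf ht hab hbc hcd hd3 hdiam hf
  obtain ⟨q, hqlen⟩ := (ht.isConnected e d).exists_walk_length_eq_dist
  have hq3 : q.length ≤ 3 := by rw [hqlen]; exact hdiam e d
  cases q with
  | nil => exact Or.inr (Or.inr (Or.inr hcd.symm))
  | cons h1 q1 =>
    rename_i m
    cases q1 with
    | nil => exact Or.inr (Or.inl (leafd e h1))
    | cons h2 q2 =>
      rename_i n
      cases q2 with
      | nil =>
        have hmc : m = c := leafd m h2
        exact Or.inr (Or.inr (Or.inr (hmc ▸ h1)))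
      | cons h3 q3 =>
        rename_i p
        have hlen0 : q3.length = 0 := by
          simp only [Walk.length_cons] at hq3; omega
        have hpd : p = d := Walk.eq_of_length_eq_zero hlen0
        have hnc : n = c := leafd n (hpd ▸ h3)
        subst hnc
        by_cases hma : m = a
        · exact Or.inl (leafa e (hma ▸ h1))
        · by_cases hmb : m = b
          · exact Or.inr (Or.inr (Or.inl (hmb ▸ h1)))
          · have hpath : (Walk.cons h2 (Walk.cons hbc.symm
                (Walk.cons hab.symm Walk.nil)) : H.Walk m a).IsPath :=
              path3_isPath h2 hbc.symm hab.symm hmb hma (Ne.symm hac)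
            have hdm : H.dist m a = 3 := by
              rw [tree_dist_eq ht hpath]; rfl
            exact Or.inr (Or.inl
              (tree_leaf ht h2 hbc.symm hab.symm hdm hdiam h1))

end TreeAux2

section SetAux2
variable {V : Type*}

lemma swap_back {X : Set V} {a b : V} (ha : a ∈ X) (hb : b ∉ X) :
    (((X \ {a}) ∪ {b}) \ {b}) ∪ {a} = X := by
  ext u
  simp only [Set.mem_union, Set.mem_diff, Set.mem_singleton_iff]
  constructor
  · rintro (⟨(⟨h, -⟩ | h), hnb⟩ | h)
    · exact h
    · exact absurd h hnb
    · rw [h]; exact ha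
  · intro h
    by_cases hua : u = a
    · exact Or.inr hua
    · exact Or.inl ⟨Or.inl ⟨h, hua⟩, fun hub => hb (by rw [← hub]; exact h)⟩

end SetAux2

section SetAux3
variable {V : Type*}

lemma swap2_ncard [Fintype V] {X : Set V} {a b c d : V}
    (ha : a ∈ X) (hb : b ∈ X) (hab : a ≠ b) (hc : c ∉ X) (hd : d ∉ X) (hcd : c ≠ d) :
    ((X \ {a, b}) ∪ {c, d}).ncard = X.ncard := by
  have h1 : (X \ {a, b}) ∪ {c, d} = insert c (insert d (X \ {a, b})) := by
    ext u
    simp only [Set.mem_union, Set.mem_diff, Set.mem_insert_iff, Set.mem_singleton_iff]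
    tauto
  have hdm : d ∉ X \ ({a, b} : Set V) := fun h => hd h.1
  have hcm : c ∉ insert d (X \ ({a, b} : Set V)) := by
    rintro (h | h)
    · exact hcd h
    · exact hc h.1
  have hsub : ({a, b} : Set V) ⊆ X := by
    rintro u (h | h)
    · rw [h]; exact ha
    · rw [h]; exact hb
  have h2 : 2 ≤ X.ncard := by
    rw [← Set.ncard_pair hab]
    exact Set.ncard_le_ncard hsub (Set.toFinite X)
  rw [h1, Set.ncard_insert_of_notMem hcm (Set.Finite.insert _ (Set.toFinite _)),
    Set.ncard_insert_of_notMem hdm (Set.toFinite _),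
    Set.ncard_diff hsub (Set.toFinite _), Set.ncard_pair hab]
  omega

end SetAux3
/-- Lemma 5.1 (adapted): structure of the six `IR(G)`-sets forming `S(2,2)`. -/
theorem statement12 {V : Type*} [Fintype V] (G : SimpleGraph V)
    (htree : (IRGraph G).IsTree) (hdiam : (IRGraph G).diam = 3)
    (X : Set V) (hX : IsIRSet G X)
    (x1 x2 x3 x1' x2' x3' : V)
    (hx1 : x1 ∈ X) (hx2 : x2 ∈ X) (hx3 : x3 ∈ X)
    (h12 : x1 ≠ x2) (h13 : x1 ≠ x3) (h23 : x2 ≠ x3)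
    (hdeg : ∀ y ∈ X, (∃ z ∈ X, G.Adj y z) ↔ (y = x1 ∨ y = x2 ∨ y = x3))
    (hepn1 : x1' ∈ EPN G x1 X) (hepn2 : x2' ∈ EPN G x2 X) (hepn3 : x3' ∈ EPN G x3 X)
    (X1 X2 X' : Set V)
    (hX1def : X1 = (X \ {x1}) ∪ {x1'})
    (hX2def : X2 = (X \ {x1, x2}) ∪ {x1', x2'})
    (hX'def : X' = (X \ {x1, x2, x3}) ∪ {x1', x2', x3'})
    (hX1 : IsIRSet G X1) (hX2 : IsIRSet G X2) (hX' : IsIRSet G X')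
    (hadj1 : (IRGraph G).Adj ⟨X, hX⟩ ⟨X1, hX1⟩)
    (hadj2 : (IRGraph G).Adj ⟨X1, hX1⟩ ⟨X2, hX2⟩)
    (hadj3 : (IRGraph G).Adj ⟨X2, hX2⟩ ⟨X', hX'⟩)
    (hgeo : (IRGraph G).dist ⟨X, hX⟩ ⟨X', hX'⟩ = 3) :
    ((∀ p ∈ ({x1, x2, x3, x1', x2', x3'} : Set V),
        ∀ q ∈ ({x1, x2, x3, x1', x2', x3'} : Set V),
        (G.Adj p q ↔
          ((p = x1 ∧ q = x2) ∨ (p = x2 ∧ q = x1) ∨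
           (p = x1 ∧ q = x3) ∨ (p = x3 ∧ q = x1) ∨
           (p = x1 ∧ q = x1') ∨ (p = x1' ∧ q = x1) ∨
           (p = x2 ∧ q = x2') ∨ (p = x2' ∧ q = x2) ∨
           (p = x3 ∧ q = x3') ∨ (p = x3' ∧ q = x3) ∨
           (p = x1' ∧ q = x3') ∨ (p = x3' ∧ q = x1') ∨
           (p = x2' ∧ q = x3') ∨ (p = x3' ∧ q = x2')))) ∧
      (∀ p ∈ X1, ∀ q ∈ X1, ¬ G.Adj p q) ∧ (∀ p ∈ X2, ∀ q ∈ X2, ¬ G.Adj p q)) ∧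
    ∃ (hU : IsIRSet G ((X \ {x3}) ∪ {x1'}))
      (hU' : IsIRSet G ((X \ {x1, x2}) ∪ {x2', x3'})),
      x3 ∈ EPN G x1 ((X \ {x3}) ∪ {x1'}) ∧
      x3' ∈ EPN G x1' ((X \ {x3}) ∪ {x1'}) ∧
      x2' ∈ EPN G x2 ((X \ {x3}) ∪ {x1'}) ∧
      ({X, X1, X2, X', (X \ {x3}) ∪ {x1'}, (X \ {x1, x2}) ∪ {x2', x3'}} :
          Set (Set V)).ncard = 6 ∧
      (IRGraph G).Adj ⟨X, hX⟩ ⟨X1, hX1⟩ ∧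
      (IRGraph G).Adj ⟨(X \ {x3}) ∪ {x1'}, hU⟩ ⟨X1, hX1⟩ ∧
      (IRGraph G).Adj ⟨X1, hX1⟩ ⟨X2, hX2⟩ ∧
      (IRGraph G).Adj ⟨X', hX'⟩ ⟨X2, hX2⟩ ∧
      (IRGraph G).Adj ⟨(X \ {x1, x2}) ∪ {x2', x3'}, hU'⟩ ⟨X2, hX2⟩ ∧
      ¬ (IRGraph G).Adj ⟨X, hX⟩ ⟨(X \ {x3}) ∪ {x1'}, hU⟩ ∧
      ¬ (IRGraph G).Adj ⟨X, hX⟩ ⟨X2, hX2⟩ ∧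
      ¬ (IRGraph G).Adj ⟨X, hX⟩ ⟨X', hX'⟩ ∧
      ¬ (IRGraph G).Adj ⟨X, hX⟩ ⟨(X \ {x1, x2}) ∪ {x2', x3'}, hU'⟩ ∧
      ¬ (IRGraph G).Adj ⟨(X \ {x3}) ∪ {x1'}, hU⟩ ⟨X2, hX2⟩ ∧
      ¬ (IRGraph G).Adj ⟨(X \ {x3}) ∪ {x1'}, hU⟩ ⟨X', hX'⟩ ∧
      ¬ (IRGraph G).Adj ⟨(X \ {x3}) ∪ {x1'}, hU⟩ ⟨(X \ {x1, x2}) ∪ {x2', x3'}, hU'⟩ ∧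
      ¬ (IRGraph G).Adj ⟨X1, hX1⟩ ⟨X', hX'⟩ ∧
      ¬ (IRGraph G).Adj ⟨X1, hX1⟩ ⟨(X \ {x1, x2}) ∪ {x2', x3'}, hU'⟩ ∧
      ¬ (IRGraph G).Adj ⟨X', hX'⟩ ⟨(X \ {x1, x2}) ∪ {x2', x3'}, hU'⟩ := by
  classical
  -- ===== unpack EPN hypotheses =====
  have hx1'X : x1' ∉ X := hepn1.2
  have hx2'X : x2' ∉ X := hepn2.2
  have hx3'X : x3' ∉ X := hepn3.2
  have adj1 : G.Adj x1 x1' := by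
    rcases hepn1.1.1 with h | h
    · exact absurd (h ▸ hx1) hx1'X
    · exact h
  have adj2 : G.Adj x2 x2' := by
    rcases hepn2.1.1 with h | h
    · exact absurd (h ▸ hx2) hx2'X
    · exact h
  have adj3 : G.Adj x3 x3' := by
    rcases hepn3.1.1 with h | h
    · exact absurd (h ▸ hx3) hx3'X
    · exact h
  have priv1 : ∀ u ∈ X, u ≠ x1 → x1' ≠ u ∧ ¬G.Adj u x1' := by
    intro u hu hne
    have := hepn1.1.2 u hu hne
    push_neg at this; exact this
  have priv2 : ∀ u ∈ X, u ≠ x2 → x2' ≠ u ∧ ¬G.Adj u x2' := by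
    intro u hu hne
    have := hepn2.1.2 u hu hne
    push_neg at this; exact this
  have priv3 : ∀ u ∈ X, u ≠ x3 → x3' ≠ u ∧ ¬G.Adj u x3' := by
    intro u hu hne
    have := hepn3.1.2 u hu hne
    push_neg at this; exact this
  -- distinctness between primes and trio
  have ne1'1 : x1' ≠ x1 := fun h => hx1'X (h ▸ hx1)
  have ne1'2 : x1' ≠ x2 := fun h => hx1'X (h ▸ hx2)
  have ne1'3 : x1' ≠ x3 := fun h => hx1'X (h ▸ hx3)
  have ne2'1 : x2' ≠ x1 := fun h => hx2'X (h ▸ hx1)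
  have ne2'2 : x2' ≠ x2 := fun h => hx2'X (h ▸ hx2)
  have ne2'3 : x2' ≠ x3 := fun h => hx2'X (h ▸ hx3)
  have ne3'1 : x3' ≠ x1 := fun h => hx3'X (h ▸ hx1)
  have ne3'2 : x3' ≠ x2 := fun h => hx3'X (h ▸ hx2)
  have ne3'3 : x3' ≠ x3 := fun h => hx3'X (h ▸ hx3)
  have ne1'2' : x1' ≠ x2' := by
    intro h
    exact (priv2 x1 hx1 h12).2 (h ▸ adj1)
  have ne1'3' : x1' ≠ x3' := by
    intro h
    exact (priv3 x1 hx1 h13).2 (h ▸ adj1)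
  have ne2'3' : x2' ≠ x3' := by
    intro h
    exact (priv3 x2 hx2 h23).2 (h ▸ adj2)
  -- F4 non-adjacencies
  have na21' : ¬G.Adj x2 x1' := (priv1 x2 hx2 h12.symm).2
  have na31' : ¬G.Adj x3 x1' := (priv1 x3 hx3 h13.symm).2
  have na12' : ¬G.Adj x1 x2' := (priv2 x1 hx1 h12).2
  have na32' : ¬G.Adj x3 x2' := (priv2 x3 hx3 h23.symm).2
  have na13' : ¬G.Adj x1 x3' := (priv3 x1 hx1 h13).2
  have na23' : ¬G.Adj x2 x3' := (priv3 x2 hx2 h23).2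
  -- isolated vertices of G[X]
  have hiso : ∀ y ∈ X, y ≠ x1 → y ≠ x2 → y ≠ x3 → ∀ z ∈ X, ¬G.Adj y z := by
    intro y hy hy1 hy2 hy3 z hz hadj
    rcases (hdeg y hy).1 ⟨z, hz, hadj⟩ with h | h | h
    · exact hy1 h
    · exact hy2 h
    · exact hy3 h
  -- ===== tree facts =====
  have hdiam3 : ∀ P Q : {D : Set V // IsIRSet G D}, (IRGraph G).dist P Q ≤ 3 := by
    intro P Q
    have hne : (IRGraph G).ediam ≠ ⊤ :=
      SimpleGraph.ediam_ne_top_of_diam_ne_zero (by rw [hdiam]; norm_num)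
    have h := SimpleGraph.dist_le_diam (G := IRGraph G) hne (u := P) (v := Q)
    rwa [hdiam] at h
  have leafX : ∀ P : {D : Set V // IsIRSet G D},
      (IRGraph G).Adj P ⟨X, hX⟩ → P = ⟨X1, hX1⟩ :=
    fun P hP => tree_leaf htree hadj1 hadj2 hadj3 hgeo hdiam3 hP
  have leafX' : ∀ P : {D : Set V // IsIRSet G D},
      (IRGraph G).Adj P ⟨X', hX'⟩ → P = ⟨X2, hX2⟩ :=
    fun P hP => tree_leaf htree hadj3.symm hadj2.symm hadj1.symm
      (by rw [SimpleGraph.dist_comm]; exact hgeo) hdiam3 hP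
  have place : ∀ P : {D : Set V // IsIRSet G D},
      P = ⟨X1, hX1⟩ ∨ P = ⟨X2, hX2⟩ ∨
      (IRGraph G).Adj P ⟨X1, hX1⟩ ∨ (IRGraph G).Adj P ⟨X2, hX2⟩ :=
    tree_place htree hadj1 hadj2 hadj3 hgeo hdiam3
  -- cardinalities
  have hcX1 : X1.ncard = X.ncard := hX1.2.trans hX.2.symm
  have hcX2 : X2.ncard = X.ncard := hX2.2.trans hX.2.symm
  have hcX' : X'.ncard = X.ncard := hX'.2.trans hX.2.symm
  -- membership lemmas
  have mX1 : ∀ u, u ∈ X1 ↔ (u ∈ X ∧ u ≠ x1) ∨ u = x1' := by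
    intro u; rw [hX1def]
    simp only [Set.mem_union, Set.mem_diff, Set.mem_singleton_iff]
  have mX2 : ∀ u, u ∈ X2 ↔ (u ∈ X ∧ u ≠ x1 ∧ u ≠ x2) ∨ u = x1' ∨ u = x2' := by
    intro u; rw [hX2def]
    simp only [Set.mem_union, Set.mem_diff, Set.mem_singleton_iff, Set.mem_insert_iff, not_or]
  have mX' : ∀ u, u ∈ X' ↔ (u ∈ X ∧ u ≠ x1 ∧ u ≠ x2 ∧ u ≠ x3) ∨ u = x1' ∨ u = x2' ∨ u = x3' := by
    intro u; rw [hX'def]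
    simp only [Set.mem_union, Set.mem_diff, Set.mem_singleton_iff, Set.mem_insert_iff, not_or]
  have hx1X1 : x1 ∉ X1 := by
    rw [mX1]; rintro (⟨-, h⟩ | h)
    · exact h rfl
    · exact ne1'1 h.symm
  have hx1X2 : x1 ∉ X2 := by
    rw [mX2]; rintro (⟨-, h, -⟩ | h | h)
    · exact h rfl
    · exact ne1'1 h.symm
    · exact ne2'1 h.symm
  have hx2X2 : x2 ∉ X2 := by
    rw [mX2]; rintro (⟨-, -, h⟩ | h | h)
    · exact h rfl
    · exact ne1'2 h.symm
    · exact ne2'2 h.symm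
  have hx1X' : x1 ∉ X' := by
    rw [mX']; rintro (⟨-, h, -, -⟩ | h | h | h)
    · exact h rfl
    · exact ne1'1 h.symm
    · exact ne2'1 h.symm
    · exact ne3'1 h.symm
  have hx2X' : x2 ∉ X' := by
    rw [mX']; rintro (⟨-, -, h, -⟩ | h | h | h)
    · exact h rfl
    · exact ne1'2 h.symm
    · exact ne2'2 h.symm
    · exact ne3'2 h.symm
  have hx1'X' : x1' ∈ X' := by rw [mX']; exact Or.inr (Or.inl rfl)
  have hx2'X' : x2' ∈ X' := by rw [mX']; exact Or.inr (Or.inr (Or.inl rfl))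
  have hx1'X2 : x1' ∈ X2 := by rw [mX2]; exact Or.inr (Or.inl rfl)
  have hx2'X2 : x2' ∈ X2 := by rw [mX2]; exact Or.inr (Or.inr rfl)
  have hx3X2 : x3 ∈ X2 := by
    rw [mX2]; exact Or.inl ⟨hx3, Ne.symm h13, Ne.symm h23⟩
  have hx3X1 : x3 ∈ X1 := by rw [mX1]; exact Or.inl ⟨hx3, Ne.symm h13⟩
  have hx2X1 : x2 ∈ X1 := by rw [mX1]; exact Or.inl ⟨hx2, Ne.symm h12⟩
  have hx1'X1 : x1' ∈ X1 := by rw [mX1]; exact Or.inr rfl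
  -- ===== Edge x2'x3' =====
  have e2'3' : G.Adj x2' x3' := by
    by_contra hne
    have humem : ∀ u, u ∈ (X' \ {x1'}) ∪ {x1} →
        (u ∈ X ∧ u ≠ x1 ∧ u ≠ x2 ∧ u ≠ x3) ∨ x2' = u ∨ x3' = u ∨ x1 = u := by
      intro u hu
      simp only [Set.mem_union, Set.mem_diff, Set.mem_singleton_iff] at hu
      rcases hu with ⟨hu1, hu2⟩ | h
      · rcases (mX' u).1 hu1 with h | h | h | h
        · exact Or.inl h
        · exact absurd h hu2
        · exact Or.inr (Or.inl h.symm)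
        · exact Or.inr (Or.inr (Or.inl h.symm))
      · exact Or.inr (Or.inr (Or.inr h.symm))
    have key : Irredundant G ((X' \ {x1'}) ∪ {x1}) := by
      intro v hv
      rcases humem v hv with ⟨hvX, hv1, hv2, hv3⟩ | rfl | rfl | rfl
      · refine ⟨v, pn_self G ?_⟩
        intro u hu hneq
        rcases humem u hu with ⟨huX, hu1, hu2, hu3⟩ | rfl | rfl | rfl
        · exact hiso u huX hu1 hu2 hu3 v hvX
        · exact fun h => (priv2 v hvX hv2).2 h.symm
        · exact fun h => (priv3 v hvX hv3).2 h.symm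
        · exact fun h => hiso v hvX hv1 hv2 hv3 x1 hx1 h.symm
      · refine ⟨x2', pn_self G ?_⟩
        intro u hu hneq
        rcases humem u hu with ⟨huX, hu1, hu2, hu3⟩ | rfl | rfl | rfl
        · exact (priv2 u huX hu2).2
        · exact absurd rfl hneq
        · exact fun h => hne h.symm
        · exact na12'
      · refine ⟨x3', pn_self G ?_⟩
        intro u hu hneq
        rcases humem u hu with ⟨huX, hu1, hu2, hu3⟩ | rfl | rfl | rfl
        · exact (priv3 u huX hu3).2
        · exact hne
        · exact absurd rfl hneq
        · exact na13'
      · refine ⟨x1, pn_self G ?_⟩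
        intro u hu hneq
        rcases humem u hu with ⟨huX, hu1, hu2, hu3⟩ | rfl | rfl | rfl
        · exact hiso u huX hu1 hu2 hu3 x1 hx1
        · exact fun h => na12' h.symm
        · exact fun h => na13' h.symm
        · exact absurd rfl hneq
    have hcard : ((X' \ {x1'}) ∪ {x1}).ncard = X.ncard := by
      rw [swap_ncard hx1'X' hx1X']; exact hcX'
    have hIR : IsIRSet G ((X' \ {x1'}) ∪ {x1}) := isIRSet_of G hX key hcard
    have hAdj : (IRGraph G).Adj ⟨X', hX'⟩ ⟨_, hIR⟩ :=
      ⟨x1', x1, hx1'X', Set.mem_union_right _ rfl, Ne.symm ne1'1, adj1.symm, rfl⟩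
    have heq := leafX' _ hAdj.symm
    have hseq : (X' \ {x1'}) ∪ {x1} = X2 := congrArg Subtype.val heq
    exact hx1X2 (hseq ▸ (Set.mem_union_right _ rfl : x1 ∈ (X' \ {x1'}) ∪ {x1}))
  -- ===== Edge x1'x3' =====
  have e1'3' : G.Adj x1' x3' := by
    by_contra hne
    have humem : ∀ u, u ∈ (X' \ {x2'}) ∪ {x2} →
        (u ∈ X ∧ u ≠ x1 ∧ u ≠ x2 ∧ u ≠ x3) ∨ x1' = u ∨ x3' = u ∨ x2 = u := by
      intro u hu
      simp only [Set.mem_union, Set.mem_diff, Set.mem_singleton_iff] at hu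
      rcases hu with ⟨hu1, hu2⟩ | h
      · rcases (mX' u).1 hu1 with h | h | h | h
        · exact Or.inl h
        · exact Or.inr (Or.inl h.symm)
        · exact absurd h hu2
        · exact Or.inr (Or.inr (Or.inl h.symm))
      · exact Or.inr (Or.inr (Or.inr h.symm))
    have key : Irredundant G ((X' \ {x2'}) ∪ {x2}) := by
      intro v hv
      rcases humem v hv with ⟨hvX, hv1, hv2, hv3⟩ | rfl | rfl | rfl
      · refine ⟨v, pn_self G ?_⟩
        intro u hu hneq
        rcases humem u hu with ⟨huX, hu1, hu2, hu3⟩ | rfl | rfl | rfl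
        · exact hiso u huX hu1 hu2 hu3 v hvX
        · exact fun h => (priv1 v hvX hv1).2 h.symm
        · exact fun h => (priv3 v hvX hv3).2 h.symm
        · exact fun h => hiso v hvX hv1 hv2 hv3 x2 hx2 h.symm
      · refine ⟨x1', pn_self G ?_⟩
        intro u hu hneq
        rcases humem u hu with ⟨huX, hu1, hu2, hu3⟩ | rfl | rfl | rfl
        · exact (priv1 u huX hu1).2
        · exact absurd rfl hneq
        · exact fun h => hne h.symm
        · exact na21'
      · refine ⟨x3', pn_self G ?_⟩
        intro u hu hneq
        rcases humem u hu with ⟨huX, hu1, hu2, hu3⟩ | rfl | rfl | rfl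
        · exact (priv3 u huX hu3).2
        · exact hne
        · exact absurd rfl hneq
        · exact na23'
      · refine ⟨x2, pn_self G ?_⟩
        intro u hu hneq
        rcases humem u hu with ⟨huX, hu1, hu2, hu3⟩ | rfl | rfl | rfl
        · exact hiso u huX hu1 hu2 hu3 x2 hx2
        · exact fun h => na21' h.symm
        · exact fun h => na23' h.symm
        · exact absurd rfl hneq
    have hcard : ((X' \ {x2'}) ∪ {x2}).ncard = X.ncard := by
      rw [swap_ncard hx2'X' hx2X']; exact hcX'
    have hIR : IsIRSet G ((X' \ {x2'}) ∪ {x2}) := isIRSet_of G hX key hcard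
    have hAdj : (IRGraph G).Adj ⟨X', hX'⟩ ⟨_, hIR⟩ :=
      ⟨x2', x2, hx2'X', Set.mem_union_right _ rfl, Ne.symm ne2'2, adj2.symm, rfl⟩
    have heq := leafX' _ hAdj.symm
    have hseq : (X' \ {x2'}) ∪ {x2} = X2 := congrArg Subtype.val heq
    exact hx2X2 (hseq ▸ (Set.mem_union_right _ rfl : x2 ∈ (X' \ {x2'}) ∪ {x2}))
  -- ===== Edge x1x2 =====
  have e12 : G.Adj x1 x2 := by
    by_contra hne
    have humem : ∀ u, u ∈ (X \ {x3}) ∪ {x3'} → (u ∈ X ∧ u ≠ x3) ∨ x3' = u := by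
      intro u hu
      simp only [Set.mem_union, Set.mem_diff, Set.mem_singleton_iff] at hu
      exact hu.imp id Eq.symm
    have key : Irredundant G ((X \ {x3}) ∪ {x3'}) := by
      intro v hv
      rcases humem v hv with ⟨hvX, hv3⟩ | rfl
      · refine ⟨v, pn_self G ?_⟩
        intro u hu hneq
        rcases humem u hu with ⟨huX, hu3⟩ | rfl
        · by_cases hv1 : x1 = v
          · subst hv1
            by_cases hu2 : x2 = u
            · subst hu2; exact fun h => hne h.symm
            · by_cases hu1 : x1 = u
              · exact absurd hu1.symm hneq
              · exact hiso u huX (fun h => hu1 h.symm) (fun h => hu2 h.symm) hu3 x1 hvX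
          · by_cases hv2 : x2 = v
            · subst hv2
              by_cases hu1 : x1 = u
              · subst hu1; exact hne
              · by_cases hu2 : x2 = u
                · exact absurd hu2.symm hneq
                · exact hiso u huX (fun h => hu1 h.symm) (fun h => hu2 h.symm) hu3 x2 hvX
            · exact fun h =>
                hiso v hvX (fun h2 => hv1 h2.symm) (fun h2 => hv2 h2.symm) hv3 u huX h.symm
        · exact fun h => (priv3 v hvX hv3).2 h.symm
      · refine ⟨x3', pn_self G ?_⟩
        intro u hu hneq
        rcases humem u hu with ⟨huX, hu3⟩ | rfl
        · exact (priv3 u huX hu3).2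
        · exact absurd rfl hneq
    have hcard : ((X \ {x3}) ∪ {x3'}).ncard = X.ncard := swap_ncard hx3 hx3'X
    have hIR : IsIRSet G ((X \ {x3}) ∪ {x3'}) := isIRSet_of G hX key hcard
    have hAdj : (IRGraph G).Adj ⟨X, hX⟩ ⟨_, hIR⟩ :=
      ⟨x3, x3', hx3, Set.mem_union_right _ rfl, ne3'3, adj3, rfl⟩
    have heq := leafX _ hAdj.symm
    have hseq : (X \ {x3}) ∪ {x3'} = X1 := congrArg Subtype.val heq
    exact hx1X1 (hseq ▸ (Set.mem_union_left _ ⟨hx1, h13⟩ : x1 ∈ (X \ {x3}) ∪ {x3'}))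
  -- ===== Edge x1x3 =====
  have e13 : G.Adj x1 x3 := by
    by_contra hne
    have humem : ∀ u, u ∈ (X \ {x2}) ∪ {x2'} → (u ∈ X ∧ u ≠ x2) ∨ x2' = u := by
      intro u hu
      simp only [Set.mem_union, Set.mem_diff, Set.mem_singleton_iff] at hu
      exact hu.imp id Eq.symm
    have key : Irredundant G ((X \ {x2}) ∪ {x2'}) := by
      intro v hv
      rcases humem v hv with ⟨hvX, hv2⟩ | rfl
      · refine ⟨v, pn_self G ?_⟩
        intro u hu hneq
        rcases humem u hu with ⟨huX, hu2⟩ | rfl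
        · by_cases hv1 : x1 = v
          · subst hv1
            by_cases hu3 : x3 = u
            · subst hu3; exact fun h => hne h.symm
            · by_cases hu1 : x1 = u
              · exact absurd hu1.symm hneq
              · exact hiso u huX (fun h => hu1 h.symm) hu2 (fun h => hu3 h.symm) x1 hvX
          · by_cases hv3 : x3 = v
            · subst hv3
              by_cases hu1 : x1 = u
              · subst hu1; exact hne
              · by_cases hu3 : x3 = u
                · exact absurd hu3.symm hneq
                · exact hiso u huX (fun h => hu1 h.symm) hu2 (fun h => hu3 h.symm) x3 hvX
            · exact fun h =>
                hiso v hvX (fun h2 => hv1 h2.symm) hv2 (fun h2 => hv3 h2.symm) u huX h.symm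
        · exact fun h => (priv2 v hvX hv2).2 h.symm
      · refine ⟨x2', pn_self G ?_⟩
        intro u hu hneq
        rcases humem u hu with ⟨huX, hu2⟩ | rfl
        · exact (priv2 u huX hu2).2
        · exact absurd rfl hneq
    have hcard : ((X \ {x2}) ∪ {x2'}).ncard = X.ncard := swap_ncard hx2 hx2'X
    have hIR : IsIRSet G ((X \ {x2}) ∪ {x2'}) := isIRSet_of G hX key hcard
    have hAdj : (IRGraph G).Adj ⟨X, hX⟩ ⟨_, hIR⟩ :=
      ⟨x2, x2', hx2, Set.mem_union_right _ rfl, ne2'2, adj2, rfl⟩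
    have heq := leafX _ hAdj.symm
    have hseq : (X \ {x2}) ∪ {x2'} = X1 := congrArg Subtype.val heq
    exact hx1X1 (hseq ▸ (Set.mem_union_left _ ⟨hx1, h12⟩ : x1 ∈ (X \ {x2}) ∪ {x2'}))
  -- ===== Non-edge x2x3 =====
  have ne23 : ¬G.Adj x2 x3 := by
    intro h23adj
    -- private neighbour w3 of x3 in X1
    obtain ⟨w3, hw3⟩ := hX1.1 x3 hx3X1
    have pw3 : ∀ u ∈ X1, u ≠ x3 → w3 ≠ u ∧ ¬G.Adj u w3 := by
      intro u hu hne
      have := hw3.2 u hu hne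
      push_neg at this; exact this
    have hw3ne3 : w3 ≠ x3 := by
      intro h
      exact (pw3 x2 hx2X1 h23).2 (by rw [h]; exact h23adj)
    have hw3adj : G.Adj x3 w3 := by
      rcases hw3.1 with h | h
      · exact absurd h hw3ne3
      · exact h
    have hw3ne2 : w3 ≠ x2 := (pw3 x2 hx2X1 h23).1
    have na2w3 : ¬G.Adj x2 w3 := (pw3 x2 hx2X1 h23).2
    have hw3ne1' : w3 ≠ x1' := (pw3 x1' hx1'X1 ne1'3).1
    have na1'w3 : ¬G.Adj x1' w3 := (pw3 x1' hx1'X1 ne1'3).2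
    have hw3ne1 : w3 ≠ x1 := by
      intro h; rw [h] at na2w3; exact na2w3 e12.symm
    have hw3ne2' : w3 ≠ x2' := by
      intro h; rw [h] at na2w3; exact na2w3 adj2
    have hw3ne3' : w3 ≠ x3' := by
      intro h; rw [h] at na1'w3; exact na1'w3 e1'3'
    have hw3nX : w3 ∉ X := by
      intro h
      by_cases h1 : w3 = x1
      · exact hw3ne1 h1
      · exact (pw3 w3 ((mX1 w3).2 (Or.inl ⟨h, h1⟩)) hw3ne3).1 rfl
    have hw3nX1 : w3 ∉ X1 := by
      rw [mX1]; rintro (⟨h, -⟩ | h)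
      · exact hw3nX h
      · exact hw3ne1' h
    have hw3nX2 : w3 ∉ X2 := by
      rw [mX2]; rintro (⟨h, -⟩ | h | h)
      · exact hw3nX h
      · exact hw3ne1' h
      · exact hw3ne2' h
    -- R-isolation of w3: no u ∈ X with u ≠ x1, u ≠ x3 is adjacent to w3
    have risow3 : ∀ u ∈ X, u ≠ x1 → u ≠ x3 → w3 ≠ u ∧ ¬G.Adj u w3 := by
      intro u hu hu1 hu3
      exact pw3 u ((mX1 u).2 (Or.inl ⟨hu, hu1⟩)) hu3
    by_cases h1'2' : G.Adj x1' x2'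
    · -- triangle case with x1'x2' edge: orphan set (X1 \ {x2,x3}) ∪ {w2,w3}
      obtain ⟨w2, hw2⟩ := hX1.1 x2 hx2X1
      have pw2 : ∀ u ∈ X1, u ≠ x2 → w2 ≠ u ∧ ¬G.Adj u w2 := by
        intro u hu hne
        have := hw2.2 u hu hne
        push_neg at this; exact this
      have hw2ne2 : w2 ≠ x2 := by
        intro h
        exact (pw2 x3 hx3X1 (Ne.symm h23)).2 (by rw [h]; exact h23adj.symm)
      have hw2adj : G.Adj x2 w2 := by
        rcases hw2.1 with h | h
        · exact absurd h hw2ne2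
        · exact h
      have hw2ne3 : w2 ≠ x3 := (pw2 x3 hx3X1 (Ne.symm h23)).1
      have na3w2 : ¬G.Adj x3 w2 := (pw2 x3 hx3X1 (Ne.symm h23)).2
      have hw2ne1' : w2 ≠ x1' := (pw2 x1' hx1'X1 ne1'2).1
      have na1'w2 : ¬G.Adj x1' w2 := (pw2 x1' hx1'X1 ne1'2).2
      have hw2ne1 : w2 ≠ x1 := by
        intro h; rw [h] at na3w2; exact na3w2 e13.symm
      have hw2ne2' : w2 ≠ x2' := by
        intro h; rw [h] at na1'w2; exact na1'w2 h1'2'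
      have hw2ne3' : w2 ≠ x3' := by
        intro h; rw [h] at na3w2; exact na3w2 adj3
      have hw2nX : w2 ∉ X := by
        intro h
        by_cases h1 : w2 = x1
        · exact hw2ne1 h1
        · exact (pw2 w2 ((mX1 w2).2 (Or.inl ⟨h, h1⟩)) hw2ne2).1 rfl
      have hw2nX1 : w2 ∉ X1 := by
        rw [mX1]; rintro (⟨h, -⟩ | h)
        · exact hw2nX h
        · exact hw2ne1' h
      have risow2 : ∀ u ∈ X, u ≠ x1 → u ≠ x2 → w2 ≠ u ∧ ¬G.Adj u w2 := by
        intro u hu hu1 hu2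
        exact pw2 u ((mX1 u).2 (Or.inl ⟨hu, hu1⟩)) hu2
      have hw2w3 : w2 ≠ w3 := by
        intro h; rw [h] at hw2adj; exact na2w3 hw2adj
      -- the orphan set
      have mD : ∀ u, u ∈ (((X1 \ {x2}) ∪ {w2}) \ {x3}) ∪ {w3} ↔
          (u ∈ X ∧ u ≠ x1 ∧ u ≠ x2 ∧ u ≠ x3) ∨ u = x1' ∨ u = w2 ∨ u = w3 := by
        intro u
        simp only [Set.mem_union, Set.mem_diff, Set.mem_singleton_iff, mX1]
        constructor
        · rintro (⟨(⟨(⟨h1, h2⟩ | h), h3⟩ | h), h4⟩ | h)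
          · exact Or.inl ⟨h1, h2, h3, h4⟩
          · exact Or.inr (Or.inl h)
          · exact Or.inr (Or.inr (Or.inl h))
          · exact Or.inr (Or.inr (Or.inr h))
        · rintro (⟨h1, h2, h3, h4⟩ | h | h | h)
          · exact Or.inl ⟨Or.inl ⟨Or.inl ⟨h1, h2⟩, h3⟩, h4⟩
          · refine Or.inl ⟨Or.inl ⟨Or.inr h, ?_⟩, ?_⟩ <;> rw [h]
            · exact ne1'2
            · exact ne1'3
          · refine Or.inl ⟨Or.inr h, ?_⟩
            rw [h]; exact hw2ne3
          · exact Or.inr h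
      have key : Irredundant G ((((X1 \ {x2}) ∪ {w2}) \ {x3}) ∪ {w3}) := by
        intro v hv
        have hvmem := (mD v).1 hv
        have hmem' : ∀ u, u ∈ (((X1 \ {x2}) ∪ {w2}) \ {x3}) ∪ {w3} →
            (u ∈ X ∧ u ≠ x1 ∧ u ≠ x2 ∧ u ≠ x3) ∨ x1' = u ∨ w2 = u ∨ w3 = u := by
          intro u hu
          rcases (mD u).1 hu with h | h | h | h
          · exact Or.inl h
          · exact Or.inr (Or.inl h.symm)
          · exact Or.inr (Or.inr (Or.inl h.symm))
          · exact Or.inr (Or.inr (Or.inr h.symm))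
        rcases hmem' v hv with ⟨hvX, hv1, hv2, hv3⟩ | rfl | rfl | rfl
        · refine ⟨v, pn_self G ?_⟩
          intro u hu hneq
          rcases hmem' u hu with ⟨huX, hu1, hu2, hu3⟩ | rfl | rfl | rfl
          · exact hiso u huX hu1 hu2 hu3 v hvX
          · exact fun h => (priv1 v hvX hv1).2 h.symm
          · exact fun h => (risow2 v hvX hv1 hv2).2 h.symm
          · exact fun h => (risow3 v hvX hv1 hv3).2 h.symm
        · refine ⟨x1', pn_self G ?_⟩
          intro u hu hneq
          rcases hmem' u hu with ⟨huX, hu1, hu2, hu3⟩ | rfl | rfl | rfl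
          · exact (priv1 u huX hu1).2
          · exact absurd rfl hneq
          · exact fun h => na1'w2 h.symm
          · exact fun h => na1'w3 h.symm
        · refine ⟨x2, pn_ext G hw2adj.symm ?_⟩
          intro u hu hneq
          rcases hmem' u hu with ⟨huX, hu1, hu2, hu3⟩ | rfl | rfl | rfl
          · exact ⟨Ne.symm hu2, hiso u huX hu1 hu2 hu3 x2 hx2⟩
          · exact ⟨Ne.symm ne1'2, fun h => na21' h.symm⟩
          · exact absurd rfl hneq
          · exact ⟨Ne.symm hw3ne2, fun h => na2w3 h.symm⟩
        · refine ⟨x3, pn_ext G hw3adj.symm ?_⟩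
          intro u hu hneq
          rcases hmem' u hu with ⟨huX, hu1, hu2, hu3⟩ | rfl | rfl | rfl
          · exact ⟨Ne.symm hu3, hiso u huX hu1 hu2 hu3 x3 hx3⟩
          · exact ⟨Ne.symm ne1'3, fun h => na31' h.symm⟩
          · exact ⟨Ne.symm hw2ne3, fun h => na3w2 h.symm⟩
          · exact absurd rfl hneq
      have hx3inner : x3 ∈ (X1 \ {x2}) ∪ {w2} :=
        Set.mem_union_left _ ⟨hx3X1, Ne.symm h23⟩
      have hw3inner : w3 ∉ (X1 \ {x2}) ∪ {w2} := by
        rintro (⟨h, -⟩ | h)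
        · exact hw3nX1 h
        · exact hw2w3 h.symm
      have hcard : ((((X1 \ {x2}) ∪ {w2}) \ {x3}) ∪ {w3}).ncard = X.ncard := by
        rw [swap_ncard hx3inner hw3inner, swap_ncard hx2X1 hw2nX1]; exact hcX1
      have hIR : IsIRSet G ((((X1 \ {x2}) ∪ {w2}) \ {x3}) ∪ {w3}) :=
        isIRSet_of G hX key hcard
      have hx2nD : x2 ∉ (((X1 \ {x2}) ∪ {w2}) \ {x3}) ∪ {w3} := by
        rw [mD]; rintro (⟨-, -, h, -⟩ | h | h | h)
        · exact h rfl
        · exact ne1'2 h.symm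
        · exact hw2ne2 h.symm
        · exact hw3ne2 h.symm
      have hx3nD : x3 ∉ (((X1 \ {x2}) ∪ {w2}) \ {x3}) ∪ {w3} := by
        rw [mD]; rintro (⟨-, -, -, h⟩ | h | h | h)
        · exact h rfl
        · exact ne1'3 h.symm
        · exact hw2ne3 h.symm
        · exact hw3ne3 h.symm
      have hx2'nD : x2' ∉ (((X1 \ {x2}) ∪ {w2}) \ {x3}) ∪ {w3} := by
        rw [mD]; rintro (⟨h, -⟩ | h | h | h)
        · exact hx2'X h
        · exact ne1'2' h.symm
        · exact hw2ne2' h.symm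
        · exact hw3ne2' h.symm
      rcases place ⟨_, hIR⟩ with h | h | h | h
      · have hseq : (((X1 \ {x2}) ∪ {w2}) \ {x3}) ∪ {w3} = X1 := congrArg Subtype.val h
        rw [hseq] at hx2nD; exact hx2nD hx2X1
      · have hseq : (((X1 \ {x2}) ∪ {w2}) \ {x3}) ∪ {w3} = X2 := congrArg Subtype.val h
        rw [hseq] at hx2'nD; exact hx2'nD hx2'X2
      · obtain ⟨a, b, ha, hb, hba, hadj', heq⟩ := h
        have hb2 : x2 = b := by
          have : x2 ∈ (((((X1 \ {x2}) ∪ {w2}) \ {x3}) ∪ {w3}) \ {a}) ∪ {b} := by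
            rw [← heq]; exact hx2X1
          rcases this with ⟨h', -⟩ | h'
          · exact absurd h' hx2nD
          · exact h'
        have hb3 : x3 = b := by
          have : x3 ∈ (((((X1 \ {x2}) ∪ {w2}) \ {x3}) ∪ {w3}) \ {a}) ∪ {b} := by
            rw [← heq]; exact hx3X1
          rcases this with ⟨h', -⟩ | h'
          · exact absurd h' hx3nD
          · exact h'
        exact h23 (hb2.trans hb3.symm)
      · obtain ⟨a, b, ha, hb, hba, hadj', heq⟩ := h
        have hb3 : x3 = b := by
          have : x3 ∈ (((((X1 \ {x2}) ∪ {w2}) \ {x3}) ∪ {w3}) \ {a}) ∪ {b} := by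
            rw [← heq]; exact hx3X2
          rcases this with ⟨h', -⟩ | h'
          · exact absurd h' hx3nD
          · exact h'
        have hb2' : x2' = b := by
          have : x2' ∈ (((((X1 \ {x2}) ∪ {w2}) \ {x3}) ∪ {w3}) \ {a}) ∪ {b} := by
            rw [← heq]; exact hx2'X2
          rcases this with ⟨h', -⟩ | h'
          · exact absurd h' hx2'nD
          · exact h'
        exact ne2'3 (hb2'.trans hb3.symm)
    · -- no x1'x2' edge: cycle via D4 = (X2\{x3})∪{w3}, D5 = (X1\{x3})∪{w3}
      have mD4 : ∀ u, u ∈ (X2 \ {x3}) ∪ {w3} ↔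
          (u ∈ X ∧ u ≠ x1 ∧ u ≠ x2 ∧ u ≠ x3) ∨ u = x1' ∨ u = x2' ∨ u = w3 := by
        intro u
        simp only [Set.mem_union, Set.mem_diff, Set.mem_singleton_iff, mX2]
        constructor
        · rintro (⟨(⟨h1, h2, h3⟩ | h | h), h4⟩ | h)
          · exact Or.inl ⟨h1, h2, h3, h4⟩
          · exact Or.inr (Or.inl h)
          · exact Or.inr (Or.inr (Or.inl h))
          · exact Or.inr (Or.inr (Or.inr h))
        · rintro (⟨h1, h2, h3, h4⟩ | h | h | h)
          · exact Or.inl ⟨Or.inl ⟨h1, h2, h3⟩, h4⟩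
          · refine Or.inl ⟨Or.inr (Or.inl h), ?_⟩; rw [h]; exact ne1'3
          · refine Or.inl ⟨Or.inr (Or.inr h), ?_⟩; rw [h]; exact ne2'3
          · exact Or.inr h
      have mD5 : ∀ u, u ∈ (X1 \ {x3}) ∪ {w3} ↔
          (u ∈ X ∧ u ≠ x1 ∧ u ≠ x3) ∨ u = x1' ∨ u = w3 := by
        intro u
        simp only [Set.mem_union, Set.mem_diff, Set.mem_singleton_iff, mX1]
        constructor
        · rintro (⟨(⟨h1, h2⟩ | h), h4⟩ | h)
          · exact Or.inl ⟨h1, h2, h4⟩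
          · exact Or.inr (Or.inl h)
          · exact Or.inr (Or.inr h)
        · rintro (⟨h1, h2, h4⟩ | h | h)
          · exact Or.inl ⟨Or.inl ⟨h1, h2⟩, h4⟩
          · refine Or.inl ⟨Or.inr h, ?_⟩; rw [h]; exact ne1'3
          · exact Or.inr h
      have keyD4 : Irredundant G ((X2 \ {x3}) ∪ {w3}) := by
        intro v hv
        have hmem' : ∀ u, u ∈ (X2 \ {x3}) ∪ {w3} →
            (u ∈ X ∧ u ≠ x1 ∧ u ≠ x2 ∧ u ≠ x3) ∨ x1' = u ∨ x2' = u ∨ w3 = u := by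
          intro u hu
          rcases (mD4 u).1 hu with h | h | h | h
          · exact Or.inl h
          · exact Or.inr (Or.inl h.symm)
          · exact Or.inr (Or.inr (Or.inl h.symm))
          · exact Or.inr (Or.inr (Or.inr h.symm))
        rcases hmem' v hv with ⟨hvX, hv1, hv2, hv3⟩ | rfl | rfl | rfl
        · refine ⟨v, pn_self G ?_⟩
          intro u hu hneq
          rcases hmem' u hu with ⟨huX, hu1, hu2, hu3⟩ | rfl | rfl | rfl
          · exact hiso u huX hu1 hu2 hu3 v hvX
          · exact fun h => (priv1 v hvX hv1).2 h.symm
          · exact fun h => (priv2 v hvX hv2).2 h.symm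
          · exact fun h => (risow3 v hvX hv1 hv3).2 h.symm
        · refine ⟨x1', pn_self G ?_⟩
          intro u hu hneq
          rcases hmem' u hu with ⟨huX, hu1, hu2, hu3⟩ | rfl | rfl | rfl
          · exact (priv1 u huX hu1).2
          · exact absurd rfl hneq
          · exact fun h => h1'2' h.symm
          · exact fun h => na1'w3 h.symm
        · refine ⟨x2, pn_ext G adj2.symm ?_⟩
          intro u hu hneq
          rcases hmem' u hu with ⟨huX, hu1, hu2, hu3⟩ | rfl | rfl | rfl
          · exact ⟨Ne.symm hu2, hiso u huX hu1 hu2 hu3 x2 hx2⟩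
          · exact ⟨Ne.symm ne1'2, fun h => na21' h.symm⟩
          · exact absurd rfl hneq
          · exact ⟨Ne.symm hw3ne2, fun h => na2w3 h.symm⟩
        · refine ⟨x3, pn_ext G hw3adj.symm ?_⟩
          intro u hu hneq
          rcases hmem' u hu with ⟨huX, hu1, hu2, hu3⟩ | rfl | rfl | rfl
          · exact ⟨Ne.symm hu3, hiso u huX hu1 hu2 hu3 x3 hx3⟩
          · exact ⟨Ne.symm ne1'3, fun h => na31' h.symm⟩
          · exact ⟨Ne.symm ne2'3, fun h => na32' h.symm⟩
          · exact absurd rfl hneq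
      have keyD5 : Irredundant G ((X1 \ {x3}) ∪ {w3}) := by
        intro v hv
        have hmem' : ∀ u, u ∈ (X1 \ {x3}) ∪ {w3} →
            (u ∈ X ∧ u ≠ x1 ∧ u ≠ x2 ∧ u ≠ x3) ∨ x2 = u ∨ x1' = u ∨ w3 = u := by
          intro u hu
          rcases (mD5 u).1 hu with h | h | h
          · by_cases hu2 : u = x2
            · exact Or.inr (Or.inl hu2.symm)
            · exact Or.inl ⟨h.1, h.2.1, hu2, h.2.2⟩
          · exact Or.inr (Or.inr (Or.inl h.symm))
          · exact Or.inr (Or.inr (Or.inr h.symm))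
        rcases hmem' v hv with ⟨hvX, hv1, hv2, hv3⟩ | rfl | rfl | rfl
        · refine ⟨v, pn_self G ?_⟩
          intro u hu hneq
          rcases hmem' u hu with ⟨huX, hu1, hu2, hu3⟩ | rfl | rfl | rfl
          · exact hiso u huX hu1 hu2 hu3 v hvX
          · exact fun h => hiso v hvX hv1 hv2 hv3 x2 hx2 h.symm
          · exact fun h => (priv1 v hvX hv1).2 h.symm
          · exact fun h => (risow3 v hvX hv1 hv3).2 h.symm
        · refine ⟨x2, pn_self G ?_⟩
          intro u hu hneq
          rcases hmem' u hu with ⟨huX, hu1, hu2, hu3⟩ | rfl | rfl | rfl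
          · exact hiso u huX hu1 hu2 hu3 x2 hx2
          · exact absurd rfl hneq
          · exact fun h => na21' h.symm
          · exact fun h => na2w3 h.symm
        · refine ⟨x1', pn_self G ?_⟩
          intro u hu hneq
          rcases hmem' u hu with ⟨huX, hu1, hu2, hu3⟩ | rfl | rfl | rfl
          · exact (priv1 u huX hu1).2
          · exact na21'
          · exact absurd rfl hneq
          · exact fun h => na1'w3 h.symm
        · refine ⟨w3, pn_self G ?_⟩
          intro u hu hneq
          rcases hmem' u hu with ⟨huX, hu1, hu2, hu3⟩ | rfl | rfl | rfl
          · exact (risow3 u huX hu1 hu3).2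
          · exact na2w3
          · exact na1'w3
          · exact absurd rfl hneq
      have hcardD4 : ((X2 \ {x3}) ∪ {w3}).ncard = X.ncard := by
        rw [swap_ncard hx3X2 hw3nX2]; exact hcX2
      have hcardD5 : ((X1 \ {x3}) ∪ {w3}).ncard = X.ncard := by
        rw [swap_ncard hx3X1 hw3nX1]; exact hcX1
      have hIRD4 : IsIRSet G ((X2 \ {x3}) ∪ {w3}) := isIRSet_of G hX keyD4 hcardD4
      have hIRD5 : IsIRSet G ((X1 \ {x3}) ∪ {w3}) := isIRSet_of G hX keyD5 hcardD5
      have hA : (IRGraph G).Adj ⟨X2, hX2⟩ ⟨_, hIRD4⟩ :=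
        ⟨x3, w3, hx3X2, Set.mem_union_right _ rfl, hw3ne3, hw3adj, rfl⟩
      have hC : (IRGraph G).Adj ⟨_, hIRD5⟩ ⟨X1, hX1⟩ := by
        refine ⟨w3, x3, Set.mem_union_right _ rfl, hx3X1, Ne.symm hw3ne3, hw3adj.symm, ?_⟩
        exact (swap_back hx3X1 hw3nX1).symm
      have hB : (IRGraph G).Adj ⟨_, hIRD4⟩ ⟨_, hIRD5⟩ := by
        refine ⟨x2', x2, ?_, ?_, Ne.symm ne2'2, adj2.symm, ?_⟩
        · exact (mD4 x2').2 (Or.inr (Or.inr (Or.inl rfl)))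
        · exact (mD5 x2).2 (Or.inl ⟨hx2, Ne.symm h12, h23⟩)
        · ext u
          simp only [Set.mem_union, Set.mem_diff, Set.mem_singleton_iff]
          constructor
          · intro h
            rcases (mD5 u).1 h with ⟨h1, h2, h4⟩ | h | h
            · by_cases hu2 : u = x2
              · exact Or.inr hu2
              · exact Or.inl ⟨(mD4 u).2 (Or.inl ⟨h1, h2, hu2, h4⟩),
                  fun hh => hx2'X (by rw [← hh]; exact h1)⟩
            · refine Or.inl ⟨(mD4 u).2 (Or.inr (Or.inl h)), ?_⟩
              rw [h]; exact ne1'2'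
            · refine Or.inl ⟨(mD4 u).2 (Or.inr (Or.inr (Or.inr h))), ?_⟩
              rw [h]; exact hw3ne2'
          · rintro (⟨h, hne⟩ | h)
            · rcases (mD4 u).1 h with ⟨h1, h2, h3, h4⟩ | h | h | h
              · exact (mD5 u).2 (Or.inl ⟨h1, h2, h4⟩)
              · exact (mD5 u).2 (Or.inr (Or.inl h))
              · exact absurd h hne
              · exact (mD5 u).2 (Or.inr (Or.inr h))
            · rw [h]
              exact (mD5 x2).2 (Or.inl ⟨hx2, Ne.symm h12, h23⟩)
      have hne14 : (⟨X1, hX1⟩ : {D : Set V // IsIRSet G D}) ≠ ⟨_, hIRD4⟩ := by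
        intro h
        have hseq : X1 = (X2 \ {x3}) ∪ {w3} := congrArg Subtype.val h
        have : x2 ∈ (X2 \ {x3}) ∪ {w3} := hseq ▸ hx2X1
        rcases (mD4 x2).1 this with ⟨-, -, h', -⟩ | h' | h' | h'
        · exact h' rfl
        · exact ne1'2 h'.symm
        · exact ne2'2 h'.symm
        · exact hw3ne2 h'.symm
      have h2d := tree_two_path htree hadj2 hA hC.symm hB.symm hne14
      have hseq : X2 = (X1 \ {x3}) ∪ {w3} := congrArg Subtype.val h2d
      have : x2' ∈ (X1 \ {x3}) ∪ {w3} := hseq ▸ hx2'X2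
      rcases (mD5 x2').1 this with ⟨h', -, -⟩ | h' | h'
      · exact hx2'X h'
      · exact ne1'2' h'.symm
      · exact hw3ne2' h'.symm
  -- ===== Non-edge x1'x2' =====
  have ne1'2'adj : ¬G.Adj x1' x2' := by
    intro h1'2'
    obtain ⟨w, hw⟩ := hX2.1 x1' hx1'X2
    have pw : ∀ u ∈ X2, u ≠ x1' → w ≠ u ∧ ¬G.Adj u w := by
      intro u hu hne
      have := hw.2 u hu hne
      push_neg at this; exact this
    have hwne1' : w ≠ x1' := by
      intro h
      exact (pw x2' hx2'X2 (Ne.symm ne1'2')).2 (by rw [h]; exact h1'2'.symm)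
    have hwadj : G.Adj x1' w := by
      rcases hw.1 with h | h
      · exact absurd h hwne1'
      · exact h
    have hwne3 : w ≠ x3 := (pw x3 hx3X2 (Ne.symm ne1'3)).1
    have na3w : ¬G.Adj x3 w := (pw x3 hx3X2 (Ne.symm ne1'3)).2
    have hwne2' : w ≠ x2' := (pw x2' hx2'X2 (Ne.symm ne1'2')).1
    have na2'w : ¬G.Adj x2' w := (pw x2' hx2'X2 (Ne.symm ne1'2')).2
    have hwne1 : w ≠ x1 := by
      intro h; rw [h] at na3w; exact na3w e13.symm
    have hwne2 : w ≠ x2 := by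
      intro h; rw [h] at hwadj; exact na21' hwadj.symm
    have hwne3' : w ≠ x3' := by
      intro h; rw [h] at na3w; exact na3w adj3
    have hwnX : w ∉ X := by
      intro h
      by_cases hh1 : w = x1
      · exact hwne1 hh1
      · by_cases hh2 : w = x2
        · exact hwne2 hh2
        · exact (pw w ((mX2 w).2 (Or.inl ⟨h, hh1, hh2⟩)) hwne1').1 rfl
    have risow : ∀ u ∈ X, u ≠ x1 → u ≠ x2 → w ≠ u ∧ ¬G.Adj u w := by
      intro u hu hu1 hu2
      exact pw u ((mX2 u).2 (Or.inl ⟨hu, hu1, hu2⟩)) (fun h => hx1'X (by rw [← h]; exact hu))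
    have hwnX2 : w ∉ X2 := by
      rw [mX2]; rintro (⟨h, -⟩ | h | h)
      · exact hwnX h
      · exact hwne1' h
      · exact hwne2' h
    have hwnX1 : w ∉ X1 := by
      rw [mX1]; rintro (⟨h, -⟩ | h)
      · exact hwnX h
      · exact hwne1' h
    have mD4 : ∀ u, u ∈ (X2 \ {x1'}) ∪ {w} ↔
        (u ∈ X ∧ u ≠ x1 ∧ u ≠ x2) ∨ u = x2' ∨ u = w := by
      intro u
      simp only [Set.mem_union, Set.mem_diff, Set.mem_singleton_iff, mX2]
      constructor
      · rintro (⟨(h | h | h), h4⟩ | h)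
        · exact Or.inl h
        · exact absurd h h4
        · exact Or.inr (Or.inl h)
        · exact Or.inr (Or.inr h)
      · rintro (h | h | h)
        · exact Or.inl ⟨Or.inl h, fun hh => hx1'X (by rw [← hh]; exact h.1)⟩
        · refine Or.inl ⟨Or.inr (Or.inr h), ?_⟩; rw [h]; exact Ne.symm ne1'2'
        · exact Or.inr h
    have mD5 : ∀ u, u ∈ (X1 \ {x1'}) ∪ {w} ↔ (u ∈ X ∧ u ≠ x1) ∨ u = w := by
      intro u
      simp only [Set.mem_union, Set.mem_diff, Set.mem_singleton_iff, mX1]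
      constructor
      · rintro (⟨(h | h), h4⟩ | h)
        · exact Or.inl h
        · exact absurd h h4
        · exact Or.inr h
      · rintro (h | h)
        · exact Or.inl ⟨Or.inl h, fun hh => hx1'X (by rw [← hh]; exact h.1)⟩
        · exact Or.inr h
    have keyD4 : Irredundant G ((X2 \ {x1'}) ∪ {w}) := by
      intro v hv
      have hmem' : ∀ u, u ∈ (X2 \ {x1'}) ∪ {w} →
          (u ∈ X ∧ u ≠ x1 ∧ u ≠ x2 ∧ u ≠ x3) ∨ x3 = u ∨ x2' = u ∨ w = u := by
        intro u hu
        rcases (mD4 u).1 hu with ⟨h1, h2, h3⟩ | h | h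
        · by_cases hu3 : u = x3
          · exact Or.inr (Or.inl hu3.symm)
          · exact Or.inl ⟨h1, h2, h3, hu3⟩
        · exact Or.inr (Or.inr (Or.inl h.symm))
        · exact Or.inr (Or.inr (Or.inr h.symm))
      rcases hmem' v hv with ⟨hvX, hv1, hv2, hv3⟩ | rfl | rfl | rfl
      · refine ⟨v, pn_self G ?_⟩
        intro u hu hneq
        rcases hmem' u hu with ⟨huX, hu1, hu2, hu3⟩ | rfl | rfl | rfl
        · exact hiso u huX hu1 hu2 hu3 v hvX
        · exact fun h => hiso v hvX hv1 hv2 hv3 x3 hx3 h.symm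
        · exact fun h => (priv2 v hvX hv2).2 h.symm
        · exact fun h => (risow v hvX hv1 hv2).2 h.symm
      · refine ⟨x3, pn_self G ?_⟩
        intro u hu hneq
        rcases hmem' u hu with ⟨huX, hu1, hu2, hu3⟩ | rfl | rfl | rfl
        · exact hiso u huX hu1 hu2 hu3 x3 hx3
        · exact absurd rfl hneq
        · exact fun h => na32' h.symm
        · exact fun h => na3w h.symm
      · refine ⟨x2', pn_self G ?_⟩
        intro u hu hneq
        rcases hmem' u hu with ⟨huX, hu1, hu2, hu3⟩ | rfl | rfl | rfl
        · exact (priv2 u huX hu2).2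
        · exact na32'
        · exact absurd rfl hneq
        · exact fun h => na2'w h.symm
      · refine ⟨w, pn_self G ?_⟩
        intro u hu hneq
        rcases hmem' u hu with ⟨huX, hu1, hu2, hu3⟩ | rfl | rfl | rfl
        · exact (risow u huX hu1 hu2).2
        · exact na3w
        · exact na2'w
        · exact absurd rfl hneq
    have keyD5 : Irredundant G ((X1 \ {x1'}) ∪ {w}) := by
      intro v hv
      have hmem' : ∀ u, u ∈ (X1 \ {x1'}) ∪ {w} →
          (u ∈ X ∧ u ≠ x1 ∧ u ≠ x2 ∧ u ≠ x3) ∨ x2 = u ∨ x3 = u ∨ w = u := by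
        intro u hu
        rcases (mD5 u).1 hu with ⟨h1, h2⟩ | h
        · by_cases hu2 : u = x2
          · exact Or.inr (Or.inl hu2.symm)
          · by_cases hu3 : u = x3
            · exact Or.inr (Or.inr (Or.inl hu3.symm))
            · exact Or.inl ⟨h1, h2, hu2, hu3⟩
        · exact Or.inr (Or.inr (Or.inr h.symm))
      rcases hmem' v hv with ⟨hvX, hv1, hv2, hv3⟩ | rfl | rfl | rfl
      · refine ⟨v, pn_self G ?_⟩
        intro u hu hneq
        rcases hmem' u hu with ⟨huX, hu1, hu2, hu3⟩ | rfl | rfl | rfl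
        · exact hiso u huX hu1 hu2 hu3 v hvX
        · exact fun h => hiso v hvX hv1 hv2 hv3 x2 hx2 h.symm
        · exact fun h => hiso v hvX hv1 hv2 hv3 x3 hx3 h.symm
        · exact fun h => (risow v hvX hv1 hv2).2 h.symm
      · refine ⟨x2', pn_ext G adj2 ?_⟩
        intro u hu hneq
        rcases hmem' u hu with ⟨huX, hu1, hu2, hu3⟩ | rfl | rfl | rfl
        · exact ⟨(priv2 u huX hu2).1, (priv2 u huX hu2).2⟩
        · exact absurd rfl hneq
        · exact ⟨ne2'3, na32'⟩
        · exact ⟨Ne.symm hwne2', fun h => na2'w h.symm⟩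
      · refine ⟨x3, pn_self G ?_⟩
        intro u hu hneq
        rcases hmem' u hu with ⟨huX, hu1, hu2, hu3⟩ | rfl | rfl | rfl
        · exact hiso u huX hu1 hu2 hu3 x3 hx3
        · exact ne23
        · exact absurd rfl hneq
        · exact fun h => na3w h.symm
      · refine ⟨x1', pn_ext G hwadj.symm ?_⟩
        intro u hu hneq
        rcases hmem' u hu with ⟨huX, hu1, hu2, hu3⟩ | rfl | rfl | rfl
        · exact ⟨(priv1 u huX hu1).1, (priv1 u huX hu1).2⟩
        · exact ⟨ne1'2, na21'⟩
        · exact ⟨ne1'3, na31'⟩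
        · exact absurd rfl hneq
    have hcardD4 : ((X2 \ {x1'}) ∪ {w}).ncard = X.ncard := by
      rw [swap_ncard hx1'X2 hwnX2]; exact hcX2
    have hcardD5 : ((X1 \ {x1'}) ∪ {w}).ncard = X.ncard := by
      rw [swap_ncard hx1'X1 hwnX1]; exact hcX1
    have hIRD4 : IsIRSet G ((X2 \ {x1'}) ∪ {w}) := isIRSet_of G hX keyD4 hcardD4
    have hIRD5 : IsIRSet G ((X1 \ {x1'}) ∪ {w}) := isIRSet_of G hX keyD5 hcardD5
    have hA : (IRGraph G).Adj ⟨X2, hX2⟩ ⟨_, hIRD4⟩ :=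
      ⟨x1', w, hx1'X2, Set.mem_union_right _ rfl, hwne1', hwadj, rfl⟩
    have hC : (IRGraph G).Adj ⟨_, hIRD5⟩ ⟨X1, hX1⟩ := by
      refine ⟨w, x1', Set.mem_union_right _ rfl, hx1'X1, Ne.symm hwne1', hwadj.symm, ?_⟩
      exact (swap_back hx1'X1 hwnX1).symm
    have hB : (IRGraph G).Adj ⟨_, hIRD4⟩ ⟨_, hIRD5⟩ := by
      refine ⟨x2', x2, ?_, ?_, Ne.symm ne2'2, adj2.symm, ?_⟩
      · exact (mD4 x2').2 (Or.inr (Or.inl rfl))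
      · exact (mD5 x2).2 (Or.inl ⟨hx2, Ne.symm h12⟩)
      · ext u
        simp only [Set.mem_union, Set.mem_diff, Set.mem_singleton_iff]
        constructor
        · intro h
          rcases (mD5 u).1 h with ⟨h1, h2⟩ | h
          · by_cases hu2 : u = x2
            · exact Or.inr hu2
            · exact Or.inl ⟨(mD4 u).2 (Or.inl ⟨h1, h2, hu2⟩),
                fun hh => hx2'X (by rw [← hh]; exact h1)⟩
          · refine Or.inl ⟨(mD4 u).2 (Or.inr (Or.inr h)), ?_⟩
            rw [h]; exact hwne2'
        · rintro (⟨h, hne⟩ | h)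
          · rcases (mD4 u).1 h with ⟨h1, h2, h3⟩ | h | h
            · exact (mD5 u).2 (Or.inl ⟨h1, h2⟩)
            · exact absurd h hne
            · exact (mD5 u).2 (Or.inr h)
          · rw [h]
            exact (mD5 x2).2 (Or.inl ⟨hx2, Ne.symm h12⟩)
    have hne14 : (⟨X1, hX1⟩ : {D : Set V // IsIRSet G D}) ≠ ⟨_, hIRD4⟩ := by
      intro h
      have hseq : X1 = (X2 \ {x1'}) ∪ {w} := congrArg Subtype.val h
      have : x1' ∈ (X2 \ {x1'}) ∪ {w} := by rw [← hseq]; exact hx1'X1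
      rcases (mD4 x1').1 this with ⟨h', -, -⟩ | h' | h'
      · exact hx1'X h'
      · exact ne1'2' h'
      · exact hwne1' h'.symm
    have h2d := tree_two_path htree hadj2 hA hC.symm hB.symm hne14
    have hseq : X2 = (X1 \ {x1'}) ∪ {w} := congrArg Subtype.val h2d
    have : x2' ∈ (X1 \ {x1'}) ∪ {w} := by rw [← hseq]; exact hx2'X2
    rcases (mD5 x2').1 this with ⟨h', -⟩ | h'
    · exact hx2'X h'
    · exact hwne2' h'.symm
  -- ===== the sets U and U' =====
  have mU : ∀ u, u ∈ (X \ {x3}) ∪ {x1'} ↔ (u ∈ X ∧ u ≠ x3) ∨ u = x1' := by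
    intro u
    simp only [Set.mem_union, Set.mem_diff, Set.mem_singleton_iff]
  have mU' : ∀ u, u ∈ (X \ {x1, x2}) ∪ {x2', x3'} ↔
      (u ∈ X ∧ u ≠ x1 ∧ u ≠ x2) ∨ u = x2' ∨ u = x3' := by
    intro u
    simp only [Set.mem_union, Set.mem_diff, Set.mem_singleton_iff, Set.mem_insert_iff, not_or]
  have memU : ∀ u, u ∈ (X \ {x3}) ∪ {x1'} →
      (u ∈ X ∧ u ≠ x1 ∧ u ≠ x2 ∧ u ≠ x3) ∨ x1 = u ∨ x2 = u ∨ x1' = u := by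
    intro u hu
    rcases (mU u).1 hu with ⟨h1, h3⟩ | h
    · by_cases hu1 : u = x1
      · exact Or.inr (Or.inl hu1.symm)
      · by_cases hu2 : u = x2
        · exact Or.inr (Or.inr (Or.inl hu2.symm))
        · exact Or.inl ⟨h1, hu1, hu2, h3⟩
    · exact Or.inr (Or.inr (Or.inr h.symm))
  have memU' : ∀ u, u ∈ (X \ {x1, x2}) ∪ {x2', x3'} →
      (u ∈ X ∧ u ≠ x1 ∧ u ≠ x2 ∧ u ≠ x3) ∨ x3 = u ∨ x2' = u ∨ x3' = u := by
    intro u hu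
    rcases (mU' u).1 hu with ⟨h1, h2, h3⟩ | h | h
    · by_cases hu3 : u = x3
      · exact Or.inr (Or.inl hu3.symm)
      · exact Or.inl ⟨h1, h2, h3, hu3⟩
    · exact Or.inr (Or.inr (Or.inl h.symm))
    · exact Or.inr (Or.inr (Or.inr h.symm))
  have keyU : Irredundant G ((X \ {x3}) ∪ {x1'}) := by
    intro v hv
    rcases memU v hv with ⟨hvX, hv1, hv2, hv3⟩ | rfl | rfl | rfl
    · refine ⟨v, pn_self G ?_⟩
      intro u hu hneq
      rcases memU u hu with ⟨huX, hu1, hu2, hu3⟩ | rfl | rfl | rfl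
      · exact hiso u huX hu1 hu2 hu3 v hvX
      · exact fun h => hiso v hvX hv1 hv2 hv3 x1 hx1 h.symm
      · exact fun h => hiso v hvX hv1 hv2 hv3 x2 hx2 h.symm
      · exact fun h => (priv1 v hvX hv1).2 h.symm
    · refine ⟨x3, pn_ext G e13 ?_⟩
      intro u hu hneq
      rcases memU u hu with ⟨huX, hu1, hu2, hu3⟩ | rfl | rfl | rfl
      · exact ⟨Ne.symm hu3, hiso u huX hu1 hu2 hu3 x3 hx3⟩
      · exact absurd rfl hneq
      · exact ⟨Ne.symm h23, ne23⟩
      · exact ⟨Ne.symm ne1'3, fun h => na31' h.symm⟩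
    · refine ⟨x2', pn_ext G adj2 ?_⟩
      intro u hu hneq
      rcases memU u hu with ⟨huX, hu1, hu2, hu3⟩ | rfl | rfl | rfl
      · exact ⟨(priv2 u huX hu2).1, (priv2 u huX hu2).2⟩
      · exact ⟨ne2'1, na12'⟩
      · exact absurd rfl hneq
      · exact ⟨Ne.symm ne1'2', ne1'2'adj⟩
    · refine ⟨x3', pn_ext G e1'3' ?_⟩
      intro u hu hneq
      rcases memU u hu with ⟨huX, hu1, hu2, hu3⟩ | rfl | rfl | rfl
      · exact ⟨(priv3 u huX hu3).1, (priv3 u huX hu3).2⟩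
      · exact ⟨ne3'1, na13'⟩
      · exact ⟨ne3'2, na23'⟩
      · exact absurd rfl hneq
  have keyU' : Irredundant G ((X \ {x1, x2}) ∪ {x2', x3'}) := by
    intro v hv
    rcases memU' v hv with ⟨hvX, hv1, hv2, hv3⟩ | rfl | rfl | rfl
    · refine ⟨v, pn_self G ?_⟩
      intro u hu hneq
      rcases memU' u hu with ⟨huX, hu1, hu2, hu3⟩ | rfl | rfl | rfl
      · exact hiso u huX hu1 hu2 hu3 v hvX
      · exact fun h => hiso v hvX hv1 hv2 hv3 x3 hx3 h.symm
      · exact fun h => (priv2 v hvX hv2).2 h.symm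
      · exact fun h => (priv3 v hvX hv3).2 h.symm
    · refine ⟨x1, pn_ext G e13.symm ?_⟩
      intro u hu hneq
      rcases memU' u hu with ⟨huX, hu1, hu2, hu3⟩ | rfl | rfl | rfl
      · exact ⟨Ne.symm hu1, hiso u huX hu1 hu2 hu3 x1 hx1⟩
      · exact absurd rfl hneq
      · exact ⟨Ne.symm ne2'1, fun h => na12' h.symm⟩
      · exact ⟨Ne.symm ne3'1, fun h => na13' h.symm⟩
    · refine ⟨x2, pn_ext G adj2.symm ?_⟩
      intro u hu hneq
      rcases memU' u hu with ⟨huX, hu1, hu2, hu3⟩ | rfl | rfl | rfl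
      · exact ⟨Ne.symm hu2, hiso u huX hu1 hu2 hu3 x2 hx2⟩
      · exact ⟨h23, fun h => ne23 h.symm⟩
      · exact absurd rfl hneq
      · exact ⟨fun h => ne3'2 h.symm, fun h => na23' h.symm⟩
    · refine ⟨x1', pn_ext G e1'3'.symm ?_⟩
      intro u hu hneq
      rcases memU' u hu with ⟨huX, hu1, hu2, hu3⟩ | rfl | rfl | rfl
      · exact ⟨(priv1 u huX hu1).1, (priv1 u huX hu1).2⟩
      · exact ⟨ne1'3, na31'⟩
      · exact ⟨ne1'2', fun h => ne1'2'adj h.symm⟩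
      · exact absurd rfl hneq
  have hcardU : ((X \ {x3}) ∪ {x1'}).ncard = X.ncard := swap_ncard hx3 hx1'X
  have hcardU' : ((X \ {x1, x2}) ∪ {x2', x3'}).ncard = X.ncard :=
    swap2_ncard hx1 hx2 h12 hx2'X hx3'X ne2'3'
  have hUIR : IsIRSet G ((X \ {x3}) ∪ {x1'}) := isIRSet_of G hX keyU hcardU
  have hU'IR : IsIRSet G ((X \ {x1, x2}) ∪ {x2', x3'}) := isIRSet_of G hX keyU' hcardU'
  -- EPN facts for U
  have hx3nU : x3 ∉ (X \ {x3}) ∪ {x1'} := by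
    rw [mU]; rintro (⟨-, h⟩ | h)
    · exact h rfl
    · exact ne1'3 h.symm
  have epnU1 : x3 ∈ EPN G x1 ((X \ {x3}) ∪ {x1'}) := by
    refine ⟨pn_ext G e13 ?_, hx3nU⟩
    intro u hu hneq
    rcases memU u hu with ⟨huX, hu1, hu2, hu3⟩ | rfl | rfl | rfl
    · exact ⟨Ne.symm hu3, hiso u huX hu1 hu2 hu3 x3 hx3⟩
    · exact absurd rfl hneq
    · exact ⟨Ne.symm h23, ne23⟩
    · exact ⟨Ne.symm ne1'3, fun h => na31' h.symm⟩
  have hx3'nU : x3' ∉ (X \ {x3}) ∪ {x1'} := by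
    rw [mU]; rintro (⟨h, -⟩ | h)
    · exact hx3'X h
    · exact ne1'3' h.symm
  have epnU2 : x3' ∈ EPN G x1' ((X \ {x3}) ∪ {x1'}) := by
    refine ⟨pn_ext G e1'3' ?_, hx3'nU⟩
    intro u hu hneq
    rcases memU u hu with ⟨huX, hu1, hu2, hu3⟩ | rfl | rfl | rfl
    · exact ⟨(priv3 u huX hu3).1, (priv3 u huX hu3).2⟩
    · exact ⟨ne3'1, na13'⟩
    · exact ⟨ne3'2, na23'⟩
    · exact absurd rfl hneq
  have hx2'nU : x2' ∉ (X \ {x3}) ∪ {x1'} := by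
    rw [mU]; rintro (⟨h, -⟩ | h)
    · exact hx2'X h
    · exact ne1'2' h.symm
  have epnU3 : x2' ∈ EPN G x2 ((X \ {x3}) ∪ {x1'}) := by
    refine ⟨pn_ext G adj2 ?_, hx2'nU⟩
    intro u hu hneq
    rcases memU u hu with ⟨huX, hu1, hu2, hu3⟩ | rfl | rfl | rfl
    · exact ⟨(priv2 u huX hu2).1, (priv2 u huX hu2).2⟩
    · exact ⟨ne2'1, na12'⟩
    · exact absurd rfl hneq
    · exact ⟨Ne.symm ne1'2', ne1'2'adj⟩
  -- positive adjacencies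
  have hx1U : x1 ∈ (X \ {x3}) ∪ {x1'} := (mU x1).2 (Or.inl ⟨hx1, h13⟩)
  have adjUX1 : (IRGraph G).Adj ⟨(X \ {x3}) ∪ {x1'}, hUIR⟩ ⟨X1, hX1⟩ := by
    refine ⟨x1, x3, hx1U, hx3X1, Ne.symm h13, e13, ?_⟩
    ext u
    simp only [Set.mem_union, Set.mem_diff, Set.mem_singleton_iff]
    constructor
    · intro h
      rcases (mX1 u).1 h with ⟨h1, h2⟩ | h
      · by_cases hu3 : u = x3
        · exact Or.inr hu3
        · exact Or.inl ⟨(mU u).2 (Or.inl ⟨h1, hu3⟩), h2⟩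
      · exact Or.inl ⟨(mU u).2 (Or.inr h), by rw [h]; exact ne1'1⟩
    · rintro (⟨h, hne⟩ | h)
      · rcases (mU u).1 h with ⟨h1, h3⟩ | h
        · exact (mX1 u).2 (Or.inl ⟨h1, hne⟩)
        · exact (mX1 u).2 (Or.inr h)
      · rw [h]; exact hx3X1
  have hx3'U' : x3' ∈ (X \ {x1, x2}) ∪ {x2', x3'} := (mU' x3').2 (Or.inr (Or.inr rfl))
  have adjU'X2 : (IRGraph G).Adj ⟨(X \ {x1, x2}) ∪ {x2', x3'}, hU'IR⟩ ⟨X2, hX2⟩ := by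
    refine ⟨x3', x1', hx3'U', hx1'X2, ne1'3', e1'3'.symm, ?_⟩
    ext u
    simp only [Set.mem_union, Set.mem_diff, Set.mem_singleton_iff]
    constructor
    · intro h
      rcases (mX2 u).1 h with ⟨h1, h2, h3⟩ | h | h
      · exact Or.inl ⟨(mU' u).2 (Or.inl ⟨h1, h2, h3⟩),
          fun hh => hx3'X (by rw [← hh]; exact h1)⟩
      · exact Or.inr h
      · exact Or.inl ⟨(mU' u).2 (Or.inr (Or.inl h)), by rw [h]; exact ne2'3'⟩
    · rintro (⟨h, hne⟩ | h)
      · rcases (mU' u).1 h with ⟨h1, h2, h3⟩ | h | h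
        · exact (mX2 u).2 (Or.inl ⟨h1, h2, h3⟩)
        · exact (mX2 u).2 (Or.inr (Or.inr h))
        · exact absurd h hne
      · rw [h]; exact hx1'X2
  -- more non-membership facts
  have hx1nU' : x1 ∉ (X \ {x1, x2}) ∪ {x2', x3'} := by
    rw [mU']; rintro (⟨-, h, -⟩ | h | h)
    · exact h rfl
    · exact ne2'1 h.symm
    · exact ne3'1 h.symm
  have hx2nU' : x2 ∉ (X \ {x1, x2}) ∪ {x2', x3'} := by
    rw [mU']; rintro (⟨-, -, h⟩ | h | h)
    · exact h rfl
    · exact ne2'2 h.symm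
    · exact ne3'2 h.symm
  have hx1'nU' : x1' ∉ (X \ {x1, x2}) ∪ {x2', x3'} := by
    rw [mU']; rintro (⟨h, -⟩ | h | h)
    · exact hx1'X h
    · exact ne1'2' h
    · exact ne1'3' h
  have hx3nX' : x3 ∉ X' := by
    rw [mX']; rintro (⟨-, -, -, h⟩ | h | h | h)
    · exact h rfl
    · exact ne1'3 h.symm
    · exact ne2'3 h.symm
    · exact ne3'3 h.symm
  have hx2'nX1 : x2' ∉ X1 := by
    rw [mX1]; rintro (⟨h, -⟩ | h)
    · exact hx2'X h
    · exact ne1'2' h.symm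
  have hx3'nX1 : x3' ∉ X1 := by
    rw [mX1]; rintro (⟨h, -⟩ | h)
    · exact hx3'X h
    · exact ne1'3' h.symm
  have hx3'X' : x3' ∈ X' := (mX' x3').2 (Or.inr (Or.inr (Or.inr rfl)))
  have hx3U' : x3 ∈ (X \ {x1, x2}) ∪ {x2', x3'} :=
    (mU' x3).2 (Or.inl ⟨hx3, Ne.symm h13, Ne.symm h23⟩)
  have hx2'U' : x2' ∈ (X \ {x1, x2}) ∪ {x2', x3'} := (mU' x2').2 (Or.inr (Or.inl rfl))
  -- ===== non-adjacencies in the IR-graph =====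
  -- generic: if B has two distinct elements not in A, then A and B are not adjacent
  have two_elt : ∀ (A B : Set V) (p q : V), p ∈ B → q ∈ B → p ∉ A → q ∉ A → p ≠ q →
      ∀ (a b : V), a ∈ A → B = (A \ {a}) ∪ {b} → False := by
    intro A B p q hpB hqB hpA hqA hpq a b ha heq
    have h1 : p ∈ (A \ {a}) ∪ {b} := by rw [← heq]; exact hpB
    have h2 : q ∈ (A \ {a}) ∪ {b} := by rw [← heq]; exact hqB
    rcases h1 with ⟨h, -⟩ | h1
    · exact hpA h
    · rcases h2 with ⟨h, -⟩ | h2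
      · exact hqA h
      · exact hpq (h1.trans h2.symm)
  have nadjXU : ¬(IRGraph G).Adj ⟨X, hX⟩ ⟨(X \ {x3}) ∪ {x1'}, hUIR⟩ := by
    rintro ⟨a, b, ha, hb, hba, hadj', heq⟩
    have hb1 : x1' = b := by
      have h1 : x1' ∈ (X \ {a}) ∪ {b} := by
        rw [← heq]; exact Set.mem_union_right _ rfl
      rcases h1 with ⟨h, -⟩ | h
      · exact absurd h hx1'X
      · exact h
    have ha3 : a = x3 := by
      by_contra h
      have : x3 ∈ (X \ {a}) ∪ {b} := Or.inl ⟨hx3, fun hh => h hh.symm⟩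
      rw [← heq] at this
      exact hx3nU this
    rw [ha3, ← hb1] at hadj'
    exact na31' hadj'
  have nadjXX2 : ¬(IRGraph G).Adj ⟨X, hX⟩ ⟨X2, hX2⟩ := by
    rintro ⟨a, b, ha, hb, hba, hadj', heq⟩
    exact two_elt X X2 x1' x2' hx1'X2 hx2'X2 hx1'X hx2'X ne1'2' a b ha heq
  have nadjXX' : ¬(IRGraph G).Adj ⟨X, hX⟩ ⟨X', hX'⟩ := by
    rintro ⟨a, b, ha, hb, hba, hadj', heq⟩
    exact two_elt X X' x1' x2' hx1'X' hx2'X' hx1'X hx2'X ne1'2' a b ha heq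
  have nadjXU' : ¬(IRGraph G).Adj ⟨X, hX⟩ ⟨(X \ {x1, x2}) ∪ {x2', x3'}, hU'IR⟩ := by
    rintro ⟨a, b, ha, hb, hba, hadj', heq⟩
    exact two_elt X _ x2' x3' hx2'U' hx3'U' hx2'X hx3'X ne2'3' a b ha heq
  have nadjUX2 : ¬(IRGraph G).Adj ⟨(X \ {x3}) ∪ {x1'}, hUIR⟩ ⟨X2, hX2⟩ := by
    rintro ⟨a, b, ha, hb, hba, hadj', heq⟩
    exact two_elt _ X2 x3 x2' hx3X2 hx2'X2 hx3nU hx2'nU (Ne.symm ne2'3) a b ha heq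
  have nadjUX' : ¬(IRGraph G).Adj ⟨(X \ {x3}) ∪ {x1'}, hUIR⟩ ⟨X', hX'⟩ := by
    rintro ⟨a, b, ha, hb, hba, hadj', heq⟩
    exact two_elt _ X' x2' x3' hx2'X' hx3'X' hx2'nU hx3'nU ne2'3' a b ha heq
  have nadjUU' : ¬(IRGraph G).Adj ⟨(X \ {x3}) ∪ {x1'}, hUIR⟩
      ⟨(X \ {x1, x2}) ∪ {x2', x3'}, hU'IR⟩ := by
    rintro ⟨a, b, ha, hb, hba, hadj', heq⟩
    exact two_elt _ _ x3 x2' hx3U' hx2'U' hx3nU hx2'nU (Ne.symm ne2'3) a b ha heq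
  have nadjX1X' : ¬(IRGraph G).Adj ⟨X1, hX1⟩ ⟨X', hX'⟩ := by
    rintro ⟨a, b, ha, hb, hba, hadj', heq⟩
    exact two_elt X1 X' x2' x3' hx2'X' hx3'X' hx2'nX1 hx3'nX1 ne2'3' a b ha heq
  have nadjX1U' : ¬(IRGraph G).Adj ⟨X1, hX1⟩ ⟨(X \ {x1, x2}) ∪ {x2', x3'}, hU'IR⟩ := by
    rintro ⟨a, b, ha, hb, hba, hadj', heq⟩
    exact two_elt X1 _ x2' x3' hx2'U' hx3'U' hx2'nX1 hx3'nX1 ne2'3' a b ha heq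
  have nadjX'U' : ¬(IRGraph G).Adj ⟨X', hX'⟩ ⟨(X \ {x1, x2}) ∪ {x2', x3'}, hU'IR⟩ := by
    rintro ⟨a, b, ha, hb, hba, hadj', heq⟩
    have hb1 : x3 = b := by
      have h1 : x3 ∈ (X' \ {a}) ∪ {b} := by rw [← heq]; exact hx3U'
      rcases h1 with ⟨h, -⟩ | h
      · exact absurd h hx3nX'
      · exact h
    have ha1 : a = x1' := by
      by_contra h
      have : x1' ∈ (X' \ {a}) ∪ {b} := Or.inl ⟨hx1'X', fun hh => h hh.symm⟩
      rw [← heq] at this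
      exact hx1'nU' this
    rw [ha1, ← hb1] at hadj'
    exact na31' hadj'.symm
  -- ===== the six sets are distinct =====
  have sne : ∀ {A B : Set V} (p : V), p ∈ A → p ∉ B → A ≠ B :=
    fun p hp hnp h => hnp (h ▸ hp)
  have d_XX1 : X ≠ X1 := sne x1 hx1 hx1X1
  have d_XX2 : X ≠ X2 := sne x1 hx1 hx1X2
  have d_XX' : X ≠ X' := sne x1 hx1 hx1X'
  have d_XU : X ≠ (X \ {x3}) ∪ {x1'} := sne x3 hx3 hx3nU
  have d_XU' : X ≠ (X \ {x1, x2}) ∪ {x2', x3'} := sne x1 hx1 hx1nU'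
  have d_X1X2 : X1 ≠ X2 := sne x2 hx2X1 hx2X2
  have d_X1X' : X1 ≠ X' := sne x2 hx2X1 hx2X'
  have d_X1U : X1 ≠ (X \ {x3}) ∪ {x1'} := sne x3 hx3X1 hx3nU
  have d_X1U' : X1 ≠ (X \ {x1, x2}) ∪ {x2', x3'} := sne x2 hx2X1 hx2nU'
  have d_X2X' : X2 ≠ X' := sne x3 hx3X2 hx3nX'
  have d_X2U : X2 ≠ (X \ {x3}) ∪ {x1'} := sne x2' hx2'X2 hx2'nU
  have d_X2U' : X2 ≠ (X \ {x1, x2}) ∪ {x2', x3'} := sne x1' hx1'X2 hx1'nU'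
  have d_X'U : X' ≠ (X \ {x3}) ∪ {x1'} := sne x3' hx3'X' hx3'nU
  have d_X'U' : X' ≠ (X \ {x1, x2}) ∪ {x2', x3'} := sne x1' hx1'X' hx1'nU'
  have d_UU' : (X \ {x3}) ∪ {x1'} ≠ (X \ {x1, x2}) ∪ {x2', x3'} := sne x1 hx1U hx1nU'
  have hncard6 : ({X, X1, X2, X', (X \ {x3}) ∪ {x1'}, (X \ {x1, x2}) ∪ {x2', x3'}} :
      Set (Set V)).ncard = 6 := by
    rw [Set.ncard_insert_of_notMem (by
        simp only [Set.mem_insert_iff, Set.mem_singleton_iff]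
        push_neg
        exact ⟨d_XX1, d_XX2, d_XX', d_XU, d_XU'⟩) (Set.toFinite _),
      Set.ncard_insert_of_notMem (by
        simp only [Set.mem_insert_iff, Set.mem_singleton_iff]
        push_neg
        exact ⟨d_X1X2, d_X1X', d_X1U, d_X1U'⟩) (Set.toFinite _),
      Set.ncard_insert_of_notMem (by
        simp only [Set.mem_insert_iff, Set.mem_singleton_iff]
        push_neg
        exact ⟨d_X2X', d_X2U, d_X2U'⟩) (Set.toFinite _),
      Set.ncard_insert_of_notMem (by
        simp only [Set.mem_insert_iff, Set.mem_singleton_iff]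
        push_neg
        exact ⟨d_X'U, d_X'U'⟩) (Set.toFinite _),
      Set.ncard_pair d_UU']
  -- ===== the edge description =====
  have e21 := e12.symm
  have e31 := e13.symm
  have adj1s := adj1.symm
  have adj2s := adj2.symm
  have adj3s := adj3.symm
  have e3'1' := e1'3'.symm
  have e3'2' := e2'3'.symm
  have nloop1 : ¬G.Adj x1 x1 := G.loopless.irrefl x1
  have nloop2 : ¬G.Adj x2 x2 := G.loopless.irrefl x2
  have nloop3 : ¬G.Adj x3 x3 := G.loopless.irrefl x3
  have nloop1' : ¬G.Adj x1' x1' := G.loopless.irrefl x1'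
  have nloop2' : ¬G.Adj x2' x2' := G.loopless.irrefl x2'
  have nloop3' : ¬G.Adj x3' x3' := G.loopless.irrefl x3'
  have ne32 : ¬G.Adj x3 x2 := fun h => ne23 h.symm
  have ne2'1'adj : ¬G.Adj x2' x1' := fun h => ne1'2'adj h.symm
  have naf12' : ¬G.Adj x2' x1 := fun h => na12' h.symm
  have naf21' : ¬G.Adj x1' x2 := fun h => na21' h.symm
  have naf13' : ¬G.Adj x3' x1 := fun h => na13' h.symm
  have naf31' : ¬G.Adj x1' x3 := fun h => na31' h.symm
  have naf23' : ¬G.Adj x3' x2 := fun h => na23' h.symm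
  have naf32' : ¬G.Adj x2' x3 := fun h => na32' h.symm
  have edge_iff : ∀ p ∈ ({x1, x2, x3, x1', x2', x3'} : Set V),
      ∀ q ∈ ({x1, x2, x3, x1', x2', x3'} : Set V),
      (G.Adj p q ↔
        ((p = x1 ∧ q = x2) ∨ (p = x2 ∧ q = x1) ∨
         (p = x1 ∧ q = x3) ∨ (p = x3 ∧ q = x1) ∨
         (p = x1 ∧ q = x1') ∨ (p = x1' ∧ q = x1) ∨
         (p = x2 ∧ q = x2') ∨ (p = x2' ∧ q = x2) ∨
         (p = x3 ∧ q = x3') ∨ (p = x3' ∧ q = x3) ∨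
         (p = x1' ∧ q = x3') ∨ (p = x3' ∧ q = x1') ∨
         (p = x2' ∧ q = x3') ∨ (p = x3' ∧ q = x2'))) := by
    intro p hp q hq
    simp only [Set.mem_insert_iff, Set.mem_singleton_iff] at hp hq
    rcases hp with h | h | h | h | h | h <;> rcases hq with h' | h' | h' | h' | h' | h' <;>
      rw [h, h'] <;>
      first
        | exact iff_of_true (by assumption) (by simp)
        | exact iff_of_false (by assumption) (by
            simp [h12, h13, h23, ne1'1, ne1'2, ne1'3, ne2'1, ne2'2, ne2'3, ne3'1,
              ne3'2, ne3'3, ne1'2', ne1'3', ne2'3', h12.symm, h13.symm, h23.symm,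
              Ne.symm ne1'1, Ne.symm ne1'2, Ne.symm ne1'3, Ne.symm ne2'1,
              Ne.symm ne2'2, Ne.symm ne2'3, Ne.symm ne3'1, Ne.symm ne3'2,
              Ne.symm ne3'3, Ne.symm ne1'2', Ne.symm ne1'3', Ne.symm ne2'3'])
  -- ===== independence of X1 and X2 =====
  have indep1 : ∀ p ∈ X1, ∀ q ∈ X1, ¬G.Adj p q := by
    intro p hp q hq hadj'
    rcases (mX1 p).1 hp with ⟨hpX, hp1⟩ | hp'
    · rcases (mX1 q).1 hq with ⟨hqX, hq1⟩ | hq'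
      · rcases (hdeg p hpX).1 ⟨q, hqX, hadj'⟩ with h | h | h
        · exact hp1 h
        · rcases (hdeg q hqX).1 ⟨p, hpX, hadj'.symm⟩ with h2 | h2 | h2
          · exact hq1 h2
          · rw [h, h2] at hadj'; exact nloop2 hadj'
          · rw [h, h2] at hadj'; exact ne23 hadj'
        · rcases (hdeg q hqX).1 ⟨p, hpX, hadj'.symm⟩ with h2 | h2 | h2
          · exact hq1 h2
          · rw [h, h2] at hadj'; exact ne32 hadj'
          · rw [h, h2] at hadj'; exact nloop3 hadj'
      · rw [hq'] at hadj'; exact (priv1 p hpX hp1).2 hadj'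
    · rcases (mX1 q).1 hq with ⟨hqX, hq1⟩ | hq'
      · rw [hp'] at hadj'; exact (priv1 q hqX hq1).2 hadj'.symm
      · rw [hp', hq'] at hadj'; exact nloop1' hadj'
  have indep2 : ∀ p ∈ X2, ∀ q ∈ X2, ¬G.Adj p q := by
    intro p hp q hq hadj'
    rcases (mX2 p).1 hp with ⟨hpX, hp1, hp2⟩ | hp' | hp'
    · rcases (mX2 q).1 hq with ⟨hqX, hq1, hq2⟩ | hq' | hq'
      · rcases (hdeg p hpX).1 ⟨q, hqX, hadj'⟩ with h | h | h
        · exact hp1 h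
        · exact hp2 h
        · rcases (hdeg q hqX).1 ⟨p, hpX, hadj'.symm⟩ with h2 | h2 | h2
          · exact hq1 h2
          · exact hq2 h2
          · rw [h, h2] at hadj'; exact nloop3 hadj'
      · rw [hq'] at hadj'; exact (priv1 p hpX hp1).2 hadj'
      · rw [hq'] at hadj'; exact (priv2 p hpX hp2).2 hadj'
    · rcases (mX2 q).1 hq with ⟨hqX, hq1, hq2⟩ | hq' | hq'
      · rw [hp'] at hadj'; exact (priv1 q hqX hq1).2 hadj'.symm
      · rw [hp', hq'] at hadj'; exact nloop1' hadj'
      · rw [hp', hq'] at hadj'; exact ne1'2'adj hadj'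
    · rcases (mX2 q).1 hq with ⟨hqX, hq1, hq2⟩ | hq' | hq'
      · rw [hp'] at hadj'; exact (priv2 q hqX hq2).2 hadj'.symm
      · rw [hp', hq'] at hadj'; exact ne2'1'adj hadj'
      · rw [hp', hq'] at hadj'; exact nloop2' hadj'
  exact ⟨⟨edge_iff, indep1, indep2⟩, hUIR, hU'IR, epnU1, epnU2, epnU3, hncard6,
    hadj1, adjUX1, hadj2, hadj3.symm, adjU'X2,
    nadjXU, nadjXX2, nadjXX', nadjXU', nadjUX2, nadjUX', nadjUU',
    nadjX1X', nadjX1U', nadjX'U'⟩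
end

section
/- Under the Setup, x_2 ∈ EPN(x_2', X_2), and x_2' is the only vertex of X_2 that has an X_2-external private neighbour. -/
open SimpleGraph

set_option linter.unusedSectionVars false

section MyAux

open SimpleGraph Walk

variable {W : Type*} {T : SimpleGraph W}

private lemma my_walk_eq_of_length_zero {u v : W} (p : T.Walk u v) (h : p.length = 0) : u = v := by
  cases p with
  | nil => rfl
  | cons h' p' => simp at h

private lemma my_walk_adj_of_length_one {u v : W} (p : T.Walk u v) (h : p.length = 1) :
    T.Adj u v := by
  cases p with
  | nil => simp at h
  | cons h' p' =>
    cases p' with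
    | nil => exact h'
    | cons h'' p'' => simp at h

private lemma my_walk_of_length_two {u v : W} (p : T.Walk u v) (h : p.length = 2) :
    ∃ m, T.Adj u m ∧ T.Adj m v := by
  cases p with
  | nil => simp at h
  | cons h' p' =>
    exact ⟨_, h', my_walk_adj_of_length_one p' (by simpa using h)⟩

private lemma my_walk_of_length_three {u v : W} (p : T.Walk u v) (h : p.length = 3) :
    ∃ a b, T.Adj u a ∧ T.Adj a b ∧ T.Adj b v := by
  cases p with
  | nil => simp at h
  | cons h' p' =>
    obtain ⟨m, h1, h2⟩ := my_walk_of_length_two p' (by simpa using h)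
    exact ⟨_, m, h', h1, h2⟩

private lemma two_paths_false (hac : T.IsAcyclic) {a b m m' : W} (hmm' : m ≠ m') (hab : a ≠ b)
    (h1 : T.Adj a m) (h2 : T.Adj m b) (h3 : T.Adj a m') (h4 : T.Adj m' b) : False := by
  have hp1 : (Walk.cons h1 (Walk.cons h2 Walk.nil)).IsPath := by
    rw [Walk.isPath_def]
    simp [h1.ne, hab, h2.ne]
  have hp2 : (Walk.cons h3 (Walk.cons h4 Walk.nil)).IsPath := by
    rw [Walk.isPath_def]
    simp [h3.ne, hab, h4.ne]
  have := isAcyclic_iff_path_unique.mp hac ⟨_, hp1⟩ ⟨_, hp2⟩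
  have := congrArg (fun q : T.Path a b => q.1.support) this
  simp [Walk.support_cons] at this
  exact hmm' this

variable {A0 A1 A2 A3 : W}

private lemma dist3_not_adj (hd : T.dist A0 A3 = 3) (h : T.Adj A0 A3) : False := by
  have := SimpleGraph.dist_le (Walk.cons h Walk.nil)
  rw [hd] at this; simp at this

private lemma dist3_not_two (hd : T.dist A0 A3 = 3) {m : W} (h1 : T.Adj A0 m)
    (h2 : T.Adj m A3) : False := by
  have := SimpleGraph.dist_le (Walk.cons h1 (Walk.cons h2 Walk.nil))
  rw [hd] at this; simp at this

private lemma dist3_ne (hd : T.dist A0 A3 = 3) : A0 ≠ A3 := by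
  intro h; subst h; rw [SimpleGraph.dist_self] at hd; exact absurd hd (by norm_num)

private lemma canonical_isPath (hd : T.dist A0 A3 = 3)
    (h01 : T.Adj A0 A1) (h12 : T.Adj A1 A2) (h23 : T.Adj A2 A3) :
    (Walk.cons h01 (Walk.cons h12 (Walk.cons h23 Walk.nil))).IsPath := by
  have n02 : A0 ≠ A2 := fun h => dist3_not_adj hd (h ▸ h23)
  have n13 : A1 ≠ A3 := fun h => dist3_not_adj hd (h ▸ h01)
  rw [Walk.isPath_def]
  simp [h01.ne, h12.ne, h23.ne, n02, n13, dist3_ne hd]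

private lemma chain_three (hac : T.IsAcyclic) (hd : T.dist A0 A3 = 3)
    (h01 : T.Adj A0 A1) (h12 : T.Adj A1 A2) (h23 : T.Adj A2 A3)
    {a b : W} (k1 : T.Adj A0 a) (k2 : T.Adj a b) (k3 : T.Adj b A3) :
    a = A1 ∧ b = A2 := by
  have n0b : A0 ≠ b := fun h => dist3_not_adj hd (h ▸ k3)
  have na3 : a ≠ A3 := fun h => dist3_not_adj hd (h ▸ k1)
  have hp : (Walk.cons k1 (Walk.cons k2 (Walk.cons k3 Walk.nil))).IsPath := by
    rw [Walk.isPath_def]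
    simp [k1.ne, k2.ne, k3.ne, n0b, na3, dist3_ne hd]
  have := isAcyclic_iff_path_unique.mp hac ⟨_, hp⟩ ⟨_, canonical_isPath hd h01 h12 h23⟩
  have := congrArg (fun q : T.Path A0 A3 => q.1.support) this
  simp [Walk.support_cons] at this
  exact this

private lemma chain_four (hac : T.IsAcyclic) (hd : T.dist A0 A3 = 3)
    (h01 : T.Adj A0 A1) (h12 : T.Adj A1 A2) (h23 : T.Adj A2 A3)
    {a b c : W} (k1 : T.Adj A0 a) (k2 : T.Adj a b) (k3 : T.Adj b c) (k4 : T.Adj c A3) :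
    False := by
  by_cases h0b : A0 = b
  · exact dist3_not_two hd (h0b ▸ k3) k4
  by_cases h0c : A0 = c
  · exact dist3_not_adj hd (h0c ▸ k4)
  by_cases hac' : a = c
  · exact dist3_not_two hd (hac' ▸ k1) k4
  by_cases ha3 : a = A3
  · exact dist3_not_adj hd (ha3 ▸ k1)
  by_cases hb3 : b = A3
  · exact dist3_not_two hd k1 (hb3 ▸ k2)
  have hp : (Walk.cons k1 (Walk.cons k2 (Walk.cons k3 (Walk.cons k4 Walk.nil)))).IsPath := by
    rw [Walk.isPath_def]
    simp [k1.ne, k2.ne, k3.ne, k4.ne, h0b, h0c, hac', ha3, hb3, dist3_ne hd]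
  have := isAcyclic_iff_path_unique.mp hac ⟨_, hp⟩ ⟨_, canonical_isPath hd h01 h12 h23⟩
  have := congrArg (fun q : T.Path A0 A3 => q.1.length) this
  simp at this

private lemma leaf_of_chain (hac : T.IsAcyclic) (hconn : T.Connected)
    (hb : ∀ u v : W, T.dist u v ≤ 3) (hd : T.dist A0 A3 = 3)
    (h01 : T.Adj A0 A1) (h12 : T.Adj A1 A2) (h23 : T.Adj A2 A3) :
    ∀ N, T.Adj N A3 → N = A2 := by
  classical
  intro N hN
  obtain ⟨w, hw⟩ := hconn.exists_walk_length_eq_dist A0 N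
  set p := w.bypass with hp
  have hlen : p.length ≤ 3 := le_trans (Walk.length_bypass_le w) (by rw [hw]; exact hb A0 N)
  have hcases : p.length = 0 ∨ p.length = 1 ∨ p.length = 2 ∨ p.length = 3 := by omega
  rcases hcases with h | h | h | h
  · exact absurd ((my_walk_eq_of_length_zero p h) ▸ hN) (fun hh => dist3_not_adj hd hh)
  · exact absurd hN (fun hh => dist3_not_two hd (my_walk_adj_of_length_one p h) hh)
  · obtain ⟨m, h1, h2⟩ := my_walk_of_length_two p h
    exact (chain_three hac hd h01 h12 h23 h1 h2 hN).2
  · obtain ⟨a, b, k1, k2, k3⟩ := my_walk_of_length_three p h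
    exact absurd hN (fun hh => chain_four hac hd h01 h12 h23 k1 k2 k3 hh)

private lemma doubleStar_of_chain (hac : T.IsAcyclic) (hconn : T.Connected)
    (hb : ∀ u v : W, T.dist u v ≤ 3) (hd : T.dist A0 A3 = 3)
    (h01 : T.Adj A0 A1) (h12 : T.Adj A1 A2) (h23 : T.Adj A2 A3) :
    ∀ N, N = A1 ∨ N = A2 ∨ T.Adj A1 N ∨ T.Adj A2 N := by
  classical
  have hd' : T.dist A3 A0 = 3 := by rw [SimpleGraph.dist_comm]; exact hd
  have leaf0 : ∀ N, T.Adj N A0 → N = A1 :=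
    leaf_of_chain hac hconn hb hd' h23.symm h12.symm h01.symm
  have leaf3 : ∀ N, T.Adj N A3 → N = A2 :=
    leaf_of_chain hac hconn hb hd h01 h12 h23
  intro N
  by_cases hN1 : N = A1
  · exact Or.inl hN1
  by_cases hN2 : N = A2
  · exact Or.inr (Or.inl hN2)
  obtain ⟨w, hw⟩ := hconn.exists_walk_length_eq_dist A0 N
  set p := w.bypass with hp
  have hlen : p.length ≤ 3 := le_trans (Walk.length_bypass_le w) (by rw [hw]; exact hb A0 N)
  have hcases : p.length = 0 ∨ p.length = 1 ∨ p.length = 2 ∨ p.length = 3 := by omega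
  rcases hcases with h | h | h | h
  · have : A0 = N := my_walk_eq_of_length_zero p h
    exact Or.inr (Or.inr (Or.inl (this ▸ h01.symm)))
  · have := my_walk_adj_of_length_one p h
    exact absurd (leaf0 N this.symm) hN1
  · obtain ⟨m, h1, h2⟩ := my_walk_of_length_two p h
    have : m = A1 := leaf0 m h1.symm
    exact Or.inr (Or.inr (Or.inl (this ▸ h2)))
  · obtain ⟨a, b, k1, k2, k3⟩ := my_walk_of_length_three p h
    have ha : a = A1 := leaf0 a k1.symm
    rw [ha] at k2
    by_cases hbA2 : b = A2
    · exact Or.inr (Or.inr (Or.inr (hbA2 ▸ k3)))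
    exfalso
    by_cases hN3 : N = A3
    · exact hbA2 (leaf3 b (hN3 ▸ k3))
    have hA3A1 : A3 ≠ A1 := fun h => dist3_not_adj hd (h ▸ h01)
    have hA3b : A3 ≠ b := by
      intro h
      exact dist3_not_two hd h01 (h ▸ k2)
    have hA3N : A3 ≠ N := fun h => hN3 h.symm
    have hA1N : A1 ≠ N := fun h => hN1 h.symm
    have hA2b : A2 ≠ b := fun h => hbA2 h.symm
    have hA2N : A2 ≠ N := fun h => hN2 h.symm
    have hP5 : (Walk.cons h23.symm (Walk.cons h12.symm (Walk.cons k2 (Walk.cons k3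
        Walk.nil)))).IsPath := by
      rw [Walk.isPath_def]
      simp [h23.ne, h23.ne', hA3A1, hA3b, hA3N, h12.ne', hA2b, hA2N, k2.ne, hA1N, k3.ne]
    obtain ⟨w2, hw2⟩ := hconn.exists_walk_length_eq_dist A3 N
    have hq : w2.bypass.length ≤ 3 :=
      le_trans (Walk.length_bypass_le w2) (by rw [hw2]; exact hb A3 N)
    have := isAcyclic_iff_path_unique.mp hac ⟨_, hP5⟩ ⟨w2.bypass, Walk.bypass_isPath w2⟩
    have := congrArg (fun q : T.Path A3 N => q.1.length) this
    simp at this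
    omega

variable {V : Type*} [Fintype V] {G : SimpleGraph V}

private lemma ndflip {a b : V} (h : ¬(a = b ∨ G.Adj b a)) : ¬(b = a ∨ G.Adj a b) := by
  rintro (rfl | hadj)
  · exact h (Or.inl rfl)
  · exact h (Or.inr hadj.symm)

private lemma ncard_swap {D : Set V} {a b : V} (ha : a ∈ D) (hb : b ∉ D) :
    ((D \ {a}) ∪ {b}).ncard = D.ncard := by
  rw [Set.union_singleton, Set.ncard_insert_of_notMem (fun h => hb h.1)]
  exact Set.ncard_diff_singleton_add_one ha

private lemma irgraph_adj_mk {D D' : Set V} (hD : IsIRSet G D) (hD' : IsIRSet G D') {a b : V}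
    (ha : a ∈ D) (hb : b ∉ D) (hadj : G.Adj a b) (heq : D' = (D \ {a}) ∪ {b}) :
    (IRGraph G).Adj ⟨D, hD⟩ ⟨D', hD'⟩ :=
  ⟨a, b, ha, by show b ∈ D'; rw [heq]; exact Or.inr rfl, fun h => hb (h ▸ ha), hadj, heq⟩

private lemma irgraph_adj_diff {D D' : {D : Set V // IsIRSet G D}} (h : (IRGraph G).Adj D D')
    {c d : V} (hc : c ∈ D.1) (hc' : c ∉ D'.1) (hd : d ∈ D.1) (hd' : d ∉ D'.1) : c = d := by
  obtain ⟨a, b, ha, hb, hba, hadj, heq⟩ := h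
  have h1 : c = a := by
    by_contra hne
    exact hc' (by rw [heq]; exact Or.inl ⟨hc, hne⟩)
  have h2 : d = a := by
    by_contra hne
    exact hd' (by rw [heq]; exact Or.inl ⟨hd, hne⟩)
  rw [h1, h2]

private lemma vert_ne {P Q : Set V} {hP : IsIRSet G P} {hQ : IsIRSet G Q} {c : V}
    (hc : c ∈ P) (hc' : c ∉ Q) : (⟨P, hP⟩ : {D : Set V // IsIRSet G D}) ≠ ⟨Q, hQ⟩ := by
  intro h
  have : P = Q := congrArg Subtype.val h
  exact hc' (this ▸ hc)

end MyAux


set_option maxHeartbeats 2000000 in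
/-- Under the Setup, `x₂ ∈ EPN(x₂', X₂)` and `x₂'` is the only vertex of `X₂`
with an `X₂`-external private neighbour. -/
theorem statement15 {V : Type*} [Fintype V] (G : SimpleGraph V)
    (htree : (IRGraph G).IsTree) (hdiam : (IRGraph G).diam = 3)
    (X : Set V) (hX : IsIRSet G X)
    (x1 x2 x3 x1' x2' x3' : V)
    (hx1 : x1 ∈ X) (hx2 : x2 ∈ X) (hx3 : x3 ∈ X)
    (h12 : x1 ≠ x2) (h13 : x1 ≠ x3) (h23 : x2 ≠ x3)
    (hdeg : ∀ y ∈ X, (∃ z ∈ X, G.Adj y z) ↔ (y = x1 ∨ y = x2 ∨ y = x3))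
    (hepn1 : x1' ∈ EPN G x1 X) (hepn2 : x2' ∈ EPN G x2 X) (hepn3 : x3' ∈ EPN G x3 X)
    (X1 X2 X' : Set V)
    (hX1def : X1 = (X \ {x1}) ∪ {x1'})
    (hX2def : X2 = (X \ {x1, x2}) ∪ {x1', x2'})
    (hX'def : X' = (X \ {x1, x2, x3}) ∪ {x1', x2', x3'})
    (hX1 : IsIRSet G X1) (hX2 : IsIRSet G X2) (hX' : IsIRSet G X')
    (hadj1 : (IRGraph G).Adj ⟨X, hX⟩ ⟨X1, hX1⟩)
    (hadj2 : (IRGraph G).Adj ⟨X1, hX1⟩ ⟨X2, hX2⟩)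
    (hadj3 : (IRGraph G).Adj ⟨X2, hX2⟩ ⟨X', hX'⟩)
    (hgeo : (IRGraph G).dist ⟨X, hX⟩ ⟨X', hX'⟩ = 3) :
    x2 ∈ EPN G x2' X2 ∧
      ∀ w ∈ X2, (EPN G w X2).Nonempty → w = x2' := by
  classical
  -- ### basic facts from the external private neighbours
  obtain ⟨⟨hd1, hp1⟩, hn1⟩ :
      ((x1' = x1 ∨ G.Adj x1 x1') ∧ ∀ u ∈ X, u ≠ x1 → ¬(x1' = u ∨ G.Adj u x1')) ∧ x1' ∉ X :=
    hepn1
  obtain ⟨⟨hd2, hp2⟩, hn2⟩ :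
      ((x2' = x2 ∨ G.Adj x2 x2') ∧ ∀ u ∈ X, u ≠ x2 → ¬(x2' = u ∨ G.Adj u x2')) ∧ x2' ∉ X :=
    hepn2
  obtain ⟨⟨hd3, hp3⟩, hn3⟩ :
      ((x3' = x3 ∨ G.Adj x3 x3') ∧ ∀ u ∈ X, u ≠ x3 → ¬(x3' = u ∨ G.Adj u x3')) ∧ x3' ∉ X :=
    hepn3
  have ha1 : G.Adj x1 x1' := by
    rcases hd1 with h | h
    · exact absurd (h.symm ▸ hx1 : x1' ∈ X) hn1
    · exact h
  have ha2 : G.Adj x2 x2' := by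
    rcases hd2 with h | h
    · exact absurd (h.symm ▸ hx2 : x2' ∈ X) hn2
    · exact h
  have ha3 : G.Adj x3 x3' := by
    rcases hd3 with h | h
    · exact absurd (h.symm ▸ hx3 : x3' ∈ X) hn3
    · exact h
  have hne12' : x1' ≠ x2' := by
    intro h
    exact hp2 x1 hx1 h12 (Or.inr (h ▸ ha1))
  have hiso : ∀ u ∈ X, u ≠ x1 → u ≠ x2 → u ≠ x3 → ∀ v ∈ X, ¬G.Adj u v := by
    intro u hu hu1 hu2 hu3 v hv hadj
    rcases (hdeg u hu).mp ⟨v, hv, hadj⟩ with h | h | h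
    · exact hu1 h
    · exact hu2 h
    · exact hu3 h
  -- ### membership characterizations
  have memX1 : ∀ u, u ∈ X1 ↔ (u ∈ X ∧ u ≠ x1) ∨ u = x1' := by
    intro u
    rw [hX1def]
    simp only [Set.mem_union, Set.mem_diff, Set.mem_singleton_iff]
  have memX2 : ∀ u, u ∈ X2 ↔ (u ∈ X ∧ u ≠ x1 ∧ u ≠ x2) ∨ u = x1' ∨ u = x2' := by
    intro u
    rw [hX2def]
    simp only [Set.mem_union, Set.mem_diff, Set.mem_insert_iff, Set.mem_singleton_iff]
    tauto
  have hx2X1 : x2 ∈ X1 := (memX1 x2).mpr (Or.inl ⟨hx2, Ne.symm h12⟩)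
  have hx3X1 : x3 ∈ X1 := (memX1 x3).mpr (Or.inl ⟨hx3, Ne.symm h13⟩)
  have h1'X1 : x1' ∈ X1 := (memX1 x1').mpr (Or.inr rfl)
  have h2'nX1 : x2' ∉ X1 := by
    intro h
    rcases (memX1 x2').mp h with ⟨hm, _⟩ | h'
    · exact hn2 hm
    · exact hne12' h'.symm
  have hx3X2 : x3 ∈ X2 := (memX2 x3).mpr (Or.inl ⟨hx3, Ne.symm h13, Ne.symm h23⟩)
  have h1'X2 : x1' ∈ X2 := (memX2 x1').mpr (Or.inr (Or.inl rfl))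
  have h2'X2 : x2' ∈ X2 := (memX2 x2').mpr (Or.inr (Or.inr rfl))
  have hx2nX2 : x2 ∉ X2 := by
    intro h
    rcases (memX2 x2).mp h with ⟨_, _, hne⟩ | h' | h'
    · exact hne rfl
    · exact hn1 (h' ▸ hx2)
    · exact hn2 (h' ▸ hx2)
  have hX2toX1 : ∀ u ∈ X2, u ≠ x2' → u ∈ X1 := by
    intro u hu hne
    rcases (memX2 u).mp hu with ⟨hm, h1, _⟩ | h' | h'
    · exact (memX1 u).mpr (Or.inl ⟨hm, h1⟩)
    · exact (memX1 u).mpr (Or.inr h')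
    · exact absurd h' hne
  have hX1toX2 : ∀ u ∈ X1, u ≠ x2 → u ∈ X2 := by
    intro u hu hne
    rcases (memX1 u).mp hu with ⟨hm, h1⟩ | h'
    · exact (memX2 u).mpr (Or.inl ⟨hm, h1, hne⟩)
    · exact (memX2 u).mpr (Or.inr (Or.inl h'))
  -- ### no edges inside X2 resp. X1 (up to the indicated possible pairs)
  have noedgeX2 : ∀ u, u ∈ X2 → ∀ v, v ∈ X2 → u ≠ v →
      (u = x1' → v = x2' → ¬G.Adj x1' x2') → (u = x2' → v = x1' → ¬G.Adj x1' x2') →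
      ¬(v = u ∨ G.Adj u v) := by
    intro u hu v hv huv hex1 hex2 hcon
    rcases hcon with h | hadj
    · exact huv h.symm
    rcases (memX2 u).mp hu with ⟨huX, hu1, hu2⟩ | rfl | rfl
    · rcases (memX2 v).mp hv with ⟨hvX, hv1, hv2⟩ | rfl | rfl
      · have h1 : u = x3 := by
          rcases (hdeg u huX).mp ⟨v, hvX, hadj⟩ with h | h | h
          · exact absurd h hu1
          · exact absurd h hu2
          · exact h
        have h2 : v = x3 := by
          rcases (hdeg v hvX).mp ⟨u, huX, hadj.symm⟩ with h | h | h
          · exact absurd h hv1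
          · exact absurd h hv2
          · exact h
        exact huv (h1.trans h2.symm)
      · exact hp1 u huX hu1 (Or.inr hadj)
      · exact hp2 u huX hu2 (Or.inr hadj)
    · rcases (memX2 v).mp hv with ⟨hvX, hv1, _⟩ | h' | h'
      · exact hp1 v hvX hv1 (Or.inr hadj.symm)
      · exact huv (h'.symm ▸ rfl)
      · exact hex1 rfl h' (h' ▸ hadj)
    · rcases (memX2 v).mp hv with ⟨hvX, _, hv2⟩ | h' | h'
      · exact hp2 v hvX hv2 (Or.inr hadj.symm)
      · exact hex2 rfl h' (h' ▸ hadj).symm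
      · exact huv (h'.symm ▸ rfl)
  have noedgeX1 : ∀ u, u ∈ X1 → ∀ v, v ∈ X1 → u ≠ v →
      (u = x2 → v = x3 → ¬G.Adj x2 x3) → (u = x3 → v = x2 → ¬G.Adj x2 x3) →
      ¬(v = u ∨ G.Adj u v) := by
    intro u hu v hv huv hex1 hex2 hcon
    rcases hcon with h | hadj
    · exact huv h.symm
    rcases (memX1 u).mp hu with ⟨huX, hu1⟩ | rfl
    · rcases (memX1 v).mp hv with ⟨hvX, hv1⟩ | rfl
      · by_cases hu2 : u = x2
        · subst hu2
          have hv3 : v = x3 := by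
            rcases (hdeg v hvX).mp ⟨u, huX, hadj.symm⟩ with h | h | h
            · exact absurd h hv1
            · exact absurd h (fun hh => huv hh.symm)
            · exact h
          exact hex1 rfl hv3 (hv3 ▸ hadj)
        · by_cases hu3 : u = x3
          · subst hu3
            have hv2 : v = x2 := by
              rcases (hdeg v hvX).mp ⟨u, huX, hadj.symm⟩ with h | h | h
              · exact absurd h hv1
              · exact h
              · exact absurd h (fun hh => huv hh.symm)
            exact hex2 rfl hv2 (hv2 ▸ hadj).symm
          · exact hiso u huX hu1 hu2 hu3 v hvX hadj
      · exact hp1 u huX hu1 (Or.inr hadj)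
    · rcases (memX1 v).mp hv with ⟨hvX, hv1⟩ | h'
      · exact hp1 v hvX hv1 (Or.inr hadj.symm)
      · exact huv (h'.symm ▸ rfl)
  -- ### tree structure facts
  have hac := htree.2
  have htc := htree.1
  have hbnd : ∀ u v : {D : Set V // IsIRSet G D}, (IRGraph G).dist u v ≤ 3 := by
    intro u v
    have hnetop : (IRGraph G).ediam ≠ ⊤ := by
      intro h
      simp [SimpleGraph.diam, h] at hdiam
    have := SimpleGraph.dist_le_diam (G := IRGraph G) hnetop (u := u) (v := v)
    rwa [hdiam] at this
  have hDS := doubleStar_of_chain hac htc hbnd hgeo hadj1 hadj2 hadj3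
  -- ### flipped no-domination helpers
  have ndomf1 : ∀ t ∈ X, t ≠ x1 → ¬(t = x1' ∨ G.Adj x1' t) :=
    fun t ht hne => ndflip (hp1 t ht hne)
  have ndomf2 : ∀ t ∈ X, t ≠ x2 → ¬(t = x2' ∨ G.Adj x2' t) :=
    fun t ht hne => ndflip (hp2 t ht hne)
  -- ### x2 and x3 are not adjacent
  have note23 : ¬G.Adj x2 x3 := by
    intro he23
    have hu2ex : ∃ u', ((u' = x2 ∨ G.Adj x2 u') ∧
        ∀ u ∈ X1, u ≠ x2 → ¬(u' = u ∨ G.Adj u u')) ∧ u' ∉ X1 := by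
      obtain ⟨p, hp⟩ := hX1.1 x2 hx2X1
      obtain ⟨hpd, hpp⟩ : (p = x2 ∨ G.Adj x2 p) ∧
          ∀ u ∈ X1, u ≠ x2 → ¬(p = u ∨ G.Adj u p) := hp
      refine ⟨p, ⟨hpd, hpp⟩, fun hpX1 => ?_⟩
      by_cases hpx : p = x2
      · refine hpp x3 hx3X1 (Ne.symm h23) (Or.inr ?_)
        rw [hpx]
        exact he23.symm
      · exact hpp p hpX1 hpx (Or.inl rfl)
    have hu3ex : ∃ u', ((u' = x3 ∨ G.Adj x3 u') ∧
        ∀ u ∈ X1, u ≠ x3 → ¬(u' = u ∨ G.Adj u u')) ∧ u' ∉ X1 := by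
      obtain ⟨p, hp⟩ := hX1.1 x3 hx3X1
      obtain ⟨hpd, hpp⟩ : (p = x3 ∨ G.Adj x3 p) ∧
          ∀ u ∈ X1, u ≠ x3 → ¬(p = u ∨ G.Adj u p) := hp
      refine ⟨p, ⟨hpd, hpp⟩, fun hpX1 => ?_⟩
      by_cases hpx : p = x3
      · refine hpp x2 hx2X1 h23 (Or.inr ?_)
        rw [hpx]
        exact he23
      · exact hpp p hpX1 hpx (Or.inl rfl)
    obtain ⟨u2, ⟨hu2dom, hu2priv⟩, hu2nX1⟩ := hu2ex
    obtain ⟨u3, ⟨hu3dom, hu3priv⟩, hu3nX1⟩ := hu3ex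
    have hu2adj : G.Adj x2 u2 := by
      rcases hu2dom with h | h
      · exact absurd (h.symm ▸ hx2X1 : u2 ∈ X1) hu2nX1
      · exact h
    have hu3adj : G.Adj x3 u3 := by
      rcases hu3dom with h | h
      · exact absurd (h.symm ▸ hx3X1 : u3 ∈ X1) hu3nX1
      · exact h
    have ndomu2 : ∀ t ∈ X1, t ≠ x2 → ¬(t = u2 ∨ G.Adj u2 t) :=
      fun t ht hne => ndflip (hu2priv t ht hne)
    have ndomu3 : ∀ t ∈ X1, t ≠ x3 → ¬(t = u3 ∨ G.Adj u3 t) :=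
      fun t ht hne => ndflip (hu3priv t ht hne)
    have hu3ne2' : u3 ≠ x2' := by
      intro h
      refine hp2 x3 hx3 (Ne.symm h23) (Or.inr ?_)
      rw [← h]
      exact hu3adj
    have hu3nX2 : u3 ∉ X2 := by
      intro h
      rcases (memX2 u3).mp h with ⟨hm, h1, _⟩ | h' | h'
      · exact hu3nX1 ((memX1 u3).mpr (Or.inl ⟨hm, h1⟩))
      · exact hu3nX1 ((memX1 u3).mpr (Or.inr h'))
      · exact hu3ne2' h'
    have hu3nx2 : u3 ≠ x2 := fun h => hu3nX1 (h.symm ▸ hx2X1 : u3 ∈ X1)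
    -- the set S = (X1 - x3) + u3 is an IR-set
    set S : Set V := (X1 \ {x3}) ∪ {u3} with hSdef
    have memS : ∀ u, u ∈ S ↔ (u ∈ X1 ∧ u ≠ x3) ∨ u = u3 := by
      intro u
      rw [hSdef]
      simp only [Set.mem_union, Set.mem_diff, Set.mem_singleton_iff]
    have hSirr : Irredundant G S := by
      intro v hv
      refine ⟨v, Or.inl rfl, fun u hu hne => ?_⟩
      rcases (memS u).mp hu with ⟨huX1, hu3'⟩ | h'
      · rcases (memS v).mp hv with ⟨hvX1, hv3'⟩ | h'
        · exact noedgeX1 u huX1 v hvX1 hne (fun _ h => (hv3' h).elim) (fun h _ => (hu3' h).elim)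
        · rw [h']
          exact hu3priv u huX1 hu3'
      · rcases (memS v).mp hv with ⟨hvX1, hv3'⟩ | h''
        · rw [h']
          exact ndomu3 v hvX1 hv3'
        · exact absurd (h''.trans h'.symm) hne.symm
    have hSIR : IsIRSet G S := ⟨hSirr, by rw [hSdef, ncard_swap hx3X1 hu3nX1]; exact hX1.2⟩
    have hx2S : x2 ∈ S := (memS x2).mpr (Or.inl ⟨hx2X1, h23⟩)
    by_cases hu2x : u2 = x2'
    · -- residual case : u2 = x2', giving a 4-cycle through X1, X2, F1, S
      have notf12 : ¬G.Adj x1' x2' := by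
        intro h
        refine hu2priv x1' h1'X1 (fun hh => hn1 (hh.symm ▸ hx2 : x1' ∈ X)) (Or.inr ?_)
        rw [hu2x]
        exact h
      set F1 : Set V := (X2 \ {x3}) ∪ {u3} with hF1def
      have memF1 : ∀ u, u ∈ F1 ↔ (u ∈ X2 ∧ u ≠ x3) ∨ u = u3 := by
        intro u
        rw [hF1def]
        simp only [Set.mem_union, Set.mem_diff, Set.mem_singleton_iff]
      have hx3nF1 : x3 ∉ F1 := by
        intro h
        rcases (memF1 x3).mp h with ⟨_, hne⟩ | h'
        · exact hne rfl
        · exact hu3nX1 (h' ▸ hx3X1)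
      have hF1irr : Irredundant G F1 := by
        intro v hv
        rcases (memF1 v).mp hv with ⟨hvX2, hv3⟩ | hvu3
        · by_cases hv2' : v = x2'
          · rw [hv2']
            refine ⟨x2, Or.inr ha2.symm, fun u hu hne => ?_⟩
            rcases (memF1 u).mp hu with ⟨huX2, hu3'⟩ | h'
            · rcases (memX2 u).mp huX2 with ⟨huX, h1, h2⟩ | h' | h'
              · rintro (h | hadj)
                · exact h2 h.symm
                · exact hiso u huX h1 h2 hu3' x2 hx2 hadj
              · rw [h']
                exact ndomf1 x2 hx2 (Ne.symm h12)
              · exact absurd h' hne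
            · rw [h']
              exact ndomu3 x2 hx2X1 h23
          · refine ⟨v, Or.inl rfl, fun u hu hne => ?_⟩
            rcases (memF1 u).mp hu with ⟨huX2, hu3'⟩ | h'
            · exact noedgeX2 u huX2 v hvX2 hne (fun _ _ => notf12) (fun _ _ => notf12)
            · rw [h']
              exact ndomu3 v (hX2toX1 v hvX2 hv2') hv3
        · rw [hvu3]
          refine ⟨x3, Or.inr hu3adj.symm, fun u hu hne => ?_⟩
          rcases (memF1 u).mp hu with ⟨huX2, hu3'⟩ | h'
          · rcases (memX2 u).mp huX2 with ⟨huX, h1, h2⟩ | h' | h'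
            · rintro (h | hadj)
              · exact hu3' h.symm
              · exact hiso u huX h1 h2 hu3' x3 hx3 hadj
            · rw [h']
              exact ndomf1 x3 hx3 (Ne.symm h13)
            · rw [h']
              exact ndomf2 x3 hx3 (Ne.symm h23)
          · exact absurd h' hne
      have hF1IR : IsIRSet G F1 := ⟨hF1irr, by rw [hF1def, ncard_swap hx3X2 hu3nX2]; exact hX2.2⟩
      have e1 : (IRGraph G).Adj ⟨X2, hX2⟩ ⟨F1, hF1IR⟩ :=
        irgraph_adj_mk hX2 hF1IR hx3X2 hu3nX2 hu3adj hF1def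
      have e2 : (IRGraph G).Adj ⟨X1, hX1⟩ ⟨S, hSIR⟩ :=
        irgraph_adj_mk hX1 hSIR hx3X1 hu3nX1 hu3adj hSdef
      have h2'nS : x2' ∉ S := by
        intro h
        rcases (memS x2').mp h with ⟨h', _⟩ | h'
        · exact h2'nX1 h'
        · exact hu3ne2' h'.symm
      have heqq : F1 = (S \ {x2}) ∪ {x2'} := by
        ext u
        rw [memF1]
        simp only [Set.mem_union, Set.mem_diff, Set.mem_singleton_iff, memS]
        constructor
        · rintro (⟨huX2, hu3'⟩ | h')
          · by_cases h' : u = x2'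
            · exact Or.inr h'
            · exact Or.inl ⟨Or.inl ⟨hX2toX1 u huX2 h', hu3'⟩,
                fun hh => hx2nX2 (hh ▸ huX2)⟩
          · exact Or.inl ⟨Or.inr h', fun hh => hu3nx2 (h'.symm.trans hh)⟩
        · rintro (⟨(⟨huX1, hu3'⟩ | h'), hux2⟩ | h')
          · exact Or.inl ⟨hX1toX2 u huX1 hux2, hu3'⟩
          · exact Or.inr h'
          · refine Or.inl ⟨(memX2 u).mpr (Or.inr (Or.inr h')), fun hh => ?_⟩
            rw [h'] at hh
            exact hn2 (hh ▸ hx3 : x2' ∈ X)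
      have e3 : (IRGraph G).Adj ⟨S, hSIR⟩ ⟨F1, hF1IR⟩ :=
        irgraph_adj_mk hSIR hF1IR hx2S h2'nS ha2 heqq
      have hx3nS : x3 ∉ S := by
        intro h
        rcases (memS x3).mp h with ⟨_, hne⟩ | h'
        · exact hne rfl
        · exact hu3nX1 (h'.symm ▸ hx3X1 : u3 ∈ X1)
      have hne1 : (⟨X2, hX2⟩ : {D : Set V // IsIRSet G D}) ≠ ⟨S, hSIR⟩ :=
        vert_ne hx3X2 hx3nS
      have hne2 : (⟨X1, hX1⟩ : {D : Set V // IsIRSet G D}) ≠ ⟨F1, hF1IR⟩ :=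
        vert_ne hx3X1 hx3nF1
      exact two_paths_false hac hne1 hne2 hadj2 e1 e2 e3
    · -- main case : u2 ≠ x2', contradiction with the double-star structure
      have hu2ne3 : u2 ≠ x3 := fun h => hu2priv x3 hx3X1 (Ne.symm h23) (Or.inl h)
      have hu2nu3 : u2 ≠ u3 := by
        intro h
        refine hu2priv x3 hx3X1 (Ne.symm h23) (Or.inr ?_)
        rw [h]
        exact hu3adj
      have hu2nS : u2 ∉ S := by
        intro h
        rcases (memS u2).mp h with ⟨h', _⟩ | h'
        · exact hu2nX1 h'
        · exact hu2nu3 h'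
      set F : Set V := (S \ {x2}) ∪ {u2} with hFdef
      have memF : ∀ u, u ∈ F ↔ ((u ∈ X1 ∧ u ≠ x3 ∧ u ≠ x2) ∨ u = u3) ∨ u = u2 := by
        intro u
        rw [hFdef]
        simp only [Set.mem_union, Set.mem_diff, Set.mem_singleton_iff, memS]
        constructor
        · rintro (⟨(⟨huX1, hu3'⟩ | h'), hux2⟩ | h')
          · exact Or.inl (Or.inl ⟨huX1, hu3', hux2⟩)
          · exact Or.inl (Or.inr h')
          · exact Or.inr h'
        · rintro ((⟨huX1, hu3', hux2⟩ | h') | h')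
          · exact Or.inl ⟨Or.inl ⟨huX1, hu3'⟩, hux2⟩
          · exact Or.inl ⟨Or.inr h', fun hh => hu3nx2 (h'.symm.trans hh)⟩
          · exact Or.inr h'
      have hFirr : Irredundant G F := by
        intro v hv
        rcases (memF v).mp hv with (⟨hvX1, hv3, hv2⟩ | hv') | hv'
        · refine ⟨v, Or.inl rfl, fun u hu hne => ?_⟩
          rcases (memF u).mp hu with (⟨huX1, hu3', hu2'⟩ | h') | h'
          · exact noedgeX1 u huX1 v hvX1 hne (fun h _ => (hu2' h).elim) (fun h _ => (hu3' h).elim)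
          · rw [h']
            exact ndomu3 v hvX1 hv3
          · rw [h']
            exact ndomu2 v hvX1 hv2
        · rw [hv']
          refine ⟨x3, Or.inr hu3adj.symm, fun u hu hne => ?_⟩
          rcases (memF u).mp hu with (⟨huX1, hu3', hu2'⟩ | h') | h'
          · rcases (memX1 u).mp huX1 with ⟨huX, h1⟩ | h'
            · rintro (h | hadj)
              · exact hu3' h.symm
              · exact hiso u huX h1 hu2' hu3' x3 hx3 hadj
            · rw [h']
              exact ndomf1 x3 hx3 (Ne.symm h13)
          · exact absurd h' hne
          · rw [h']
            exact ndomu2 x3 hx3X1 (Ne.symm h23)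
        · rw [hv']
          refine ⟨x2, Or.inr hu2adj.symm, fun u hu hne => ?_⟩
          rcases (memF u).mp hu with (⟨huX1, hu3', hu2'⟩ | h') | h'
          · rcases (memX1 u).mp huX1 with ⟨huX, h1⟩ | h'
            · rintro (h | hadj)
              · exact hu2' h.symm
              · exact hiso u huX h1 hu2' hu3' x2 hx2 hadj
            · rw [h']
              exact ndomf1 x2 hx2 (Ne.symm h12)
          · rw [h']
            exact ndomu3 x2 hx2X1 h23
          · exact absurd h' hne
      have hFIR : IsIRSet G F := ⟨hFirr, by
        rw [hFdef, ncard_swap hx2S hu2nS, hSdef, ncard_swap hx3X1 hu3nX1]; exact hX1.2⟩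
      have hx2nF : x2 ∉ F := by
        intro h
        rcases (memF x2).mp h with (⟨_, _, hne⟩ | h') | h'
        · exact hne rfl
        · exact hu3nx2 h'.symm
        · exact hu2nX1 (h' ▸ hx2X1)
      have hx3nF : x3 ∉ F := by
        intro h
        rcases (memF x3).mp h with (⟨_, hne, _⟩ | h') | h'
        · exact hne rfl
        · exact hu3nX1 (h' ▸ hx3X1)
        · exact hu2ne3 h'.symm
      have h2'nF : x2' ∉ F := by
        intro h
        rcases (memF x2').mp h with (⟨h', _, _⟩ | h') | h'
        · exact h2'nX1 h'
        · exact hu3ne2' h'.symm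
        · exact hu2x h'.symm
      rcases hDS ⟨F, hFIR⟩ with h | h | h | h
      · exact hx2nF (by rw [show F = X1 from congrArg Subtype.val h]; exact hx2X1)
      · exact hx3nF (by rw [show F = X2 from congrArg Subtype.val h]; exact hx3X2)
      · exact h23 (irgraph_adj_diff h hx2X1 hx2nF hx3X1 hx3nF)
      · exact hn2 ((irgraph_adj_diff h hx3X2 hx3nF h2'X2 h2'nF) ▸ hx3 : x2' ∈ X)
  -- ### helper using note23
  have ndx2w : ∀ w', w' ∈ X2 → w' ≠ x2' → ¬(w' = x2 ∨ G.Adj x2 w') := by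
    intro w' hw' hne hcon
    rcases (memX2 w').mp hw' with ⟨hX', h1', h2'⟩ | h' | h'
    · rcases hcon with h | hadj
      · exact h2' h
      · by_cases h3' : w' = x3
        · rw [h3'] at hadj
          exact note23 hadj
        · exact hiso w' hX' h1' h2' h3' x2 hx2 hadj.symm
    · rw [h'] at hcon
      exact hp1 x2 hx2 (Ne.symm h12) hcon
    · exact hne h'
  -- ### the generic 4-cycle argument
  have CYCLE : ∀ w z : V, w ∈ X2 → w ≠ x2' → (z = w ∨ G.Adj w z) →
      (∀ u ∈ X2, u ≠ w → ¬(z = u ∨ G.Adj u z)) → z ∉ X2 →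
      (w ≠ x1' → ¬G.Adj x1' x2') → False := by
    intro w z hwX2 hwne2' hzdom hzpriv hznX2 hf12c
    have hzadj : G.Adj w z := by
      rcases hzdom with h | h
      · exact absurd (h.symm ▸ hwX2 : z ∈ X2) hznX2
      · exact h
    have hwX1 : w ∈ X1 := hX2toX1 w hwX2 hwne2'
    have hznx2 : z ≠ x2 := by
      intro h
      refine hzpriv x2' h2'X2 (fun hh => hwne2' hh.symm) (Or.inr ?_)
      rw [h]
      exact ha2.symm
    have hznX1 : z ∉ X1 := by
      intro h
      rcases (memX1 z).mp h with ⟨hzX, hz1⟩ | h'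
      · exact hznX2 ((memX2 z).mpr (Or.inl ⟨hzX, hz1, hznx2⟩))
      · exact hznX2 ((memX2 z).mpr (Or.inr (Or.inl h')))
    have ndomz : ∀ t ∈ X2, t ≠ w → ¬(t = z ∨ G.Adj z t) :=
      fun t ht hne => ndflip (hzpriv t ht hne)
    set Wz : Set V := (X2 \ {w}) ∪ {z} with hWdef
    set V2 : Set V := (X1 \ {w}) ∪ {z} with hVdef
    have memW : ∀ u, u ∈ Wz ↔ (u ∈ X2 ∧ u ≠ w) ∨ u = z := by
      intro u
      rw [hWdef]
      simp only [Set.mem_union, Set.mem_diff, Set.mem_singleton_iff]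
    have memV : ∀ u, u ∈ V2 ↔ (u ∈ X1 ∧ u ≠ w) ∨ u = z := by
      intro u
      rw [hVdef]
      simp only [Set.mem_union, Set.mem_diff, Set.mem_singleton_iff]
    have hWirr : Irredundant G Wz := by
      intro v hv
      refine ⟨v, Or.inl rfl, fun u hu hne => ?_⟩
      rcases (memW u).mp hu with ⟨huX2, huw⟩ | h'
      · rcases (memW v).mp hv with ⟨hvX2, hvw⟩ | hv'
        · refine noedgeX2 u huX2 v hvX2 hne ?_ ?_
          · intro hu' _
            exact hf12c (fun hw' => huw (hu'.trans hw'.symm))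
          · intro _ hv'
            exact hf12c (fun hw' => hvw (hv'.trans hw'.symm))
        · rw [hv']
          exact hzpriv u huX2 huw
      · rcases (memW v).mp hv with ⟨hvX2, hvw⟩ | hv'
        · rw [h']
          exact ndomz v hvX2 hvw
        · exact absurd (h'.trans hv'.symm) hne
    have hVirr : Irredundant G V2 := by
      intro v hv
      rcases (memV v).mp hv with ⟨hvX1, hvw⟩ | hv'
      · by_cases hvx2 : v = x2
        · rw [hvx2]
          refine ⟨x2', Or.inr ha2, fun u hu hne => ?_⟩
          rcases (memV u).mp hu with ⟨huX1, huw⟩ | h'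
          · rcases (memX1 u).mp huX1 with ⟨huX, h1⟩ | h'
            · exact hp2 u huX hne
            · rw [h']
              rintro (h | hadj)
              · exact hne12' h.symm
              · exact hf12c (fun hw' => huw (h'.trans hw'.symm)) hadj
          · rw [h']
            rintro (h | hadj)
            · exact hznX2 (h.symm ▸ h2'X2 : z ∈ X2)
            · exact hzpriv x2' h2'X2 (fun hh => hwne2' hh.symm) (Or.inr hadj.symm)
        · refine ⟨v, Or.inl rfl, fun u hu hne => ?_⟩
          have hvX2 : v ∈ X2 := hX1toX2 v hvX1 hvx2
          rcases (memV u).mp hu with ⟨huX1, huw⟩ | h'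
          · by_cases hux2 : u = x2
            · rw [hux2]
              exact ndx2w v hvX2 (fun h => h2'nX1 (h ▸ hvX1))
            · refine noedgeX2 u (hX1toX2 u huX1 hux2) v hvX2 hne ?_ ?_
              · intro hu' _
                exact hf12c (fun hw' => huw (hu'.trans hw'.symm))
              · intro hu' _
                exact (h2'nX1 (hu' ▸ huX1)).elim
          · rw [h']
            exact ndomz v hvX2 hvw
      · rw [hv']
        refine ⟨w, Or.inr hzadj.symm, fun u hu hne => ?_⟩
        rcases (memV u).mp hu with ⟨huX1, huw⟩ | h'
        · by_cases hux2 : u = x2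
          · rw [hux2]
            exact ndx2w w hwX2 hwne2'
          · refine noedgeX2 u (hX1toX2 u huX1 hux2) w hwX2 huw ?_ ?_
            · intro _ hw'
              exact (hwne2' hw').elim
            · intro hu' _
              exact (h2'nX1 (hu' ▸ huX1)).elim
        · exact absurd h' hne
    have hWIR : IsIRSet G Wz := ⟨hWirr, by rw [hWdef, ncard_swap hwX2 hznX2]; exact hX2.2⟩
    have hVIR : IsIRSet G V2 := ⟨hVirr, by rw [hVdef, ncard_swap hwX1 hznX1]; exact hX1.2⟩
    have eA : (IRGraph G).Adj ⟨X2, hX2⟩ ⟨Wz, hWIR⟩ :=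
      irgraph_adj_mk hX2 hWIR hwX2 hznX2 hzadj hWdef
    have eB : (IRGraph G).Adj ⟨X1, hX1⟩ ⟨V2, hVIR⟩ :=
      irgraph_adj_mk hX1 hVIR hwX1 hznX1 hzadj hVdef
    have hx2V2 : x2 ∈ V2 := (memV x2).mpr (Or.inl ⟨hx2X1, fun h => hx2nX2 (h.symm ▸ hwX2)⟩)
    have h2'nV2 : x2' ∉ V2 := by
      intro h
      rcases (memV x2').mp h with ⟨h', _⟩ | h'
      · exact h2'nX1 h'
      · exact hznX2 (h'.symm ▸ h2'X2 : z ∈ X2)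
    have h2'Wz : x2' ∈ Wz := (memW x2').mpr (Or.inl ⟨h2'X2, fun h => hwne2' h.symm⟩)
    have heqq : Wz = (V2 \ {x2}) ∪ {x2'} := by
      ext u
      rw [memW]
      simp only [Set.mem_union, Set.mem_diff, Set.mem_singleton_iff, memV]
      constructor
      · rintro (⟨huX2, huw⟩ | h')
        · by_cases h2' : u = x2'
          · exact Or.inr h2'
          · exact Or.inl ⟨Or.inl ⟨hX2toX1 u huX2 h2', huw⟩, fun hh => hx2nX2 (hh ▸ huX2)⟩
        · exact Or.inl ⟨Or.inr h', fun hh => hznx2 (h'.symm.trans hh)⟩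
      · rintro (⟨(⟨huX1, huw⟩ | h'), hux2⟩ | h')
        · exact Or.inl ⟨hX1toX2 u huX1 hux2, huw⟩
        · exact Or.inr h'
        · exact Or.inl ⟨(memX2 u).mpr (Or.inr (Or.inr h')), fun hh => hwne2' (hh.symm.trans h')⟩
    have eC : (IRGraph G).Adj ⟨V2, hVIR⟩ ⟨Wz, hWIR⟩ :=
      irgraph_adj_mk hVIR hWIR hx2V2 h2'nV2 ha2 heqq
    have hne1 : (⟨X2, hX2⟩ : {D : Set V // IsIRSet G D}) ≠ ⟨V2, hVIR⟩ :=
      fun h => hx2nX2 (by rw [show X2 = V2 from congrArg Subtype.val h]; exact hx2V2)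
    have hne2 : (⟨X1, hX1⟩ : {D : Set V // IsIRSet G D}) ≠ ⟨Wz, hWIR⟩ :=
      fun h => h2'nX1 (by rw [show X1 = Wz from congrArg Subtype.val h]; exact h2'Wz)
    exact two_paths_false hac hne1 hne2 hadj2 eA eB eC
  -- ### x1' and x2' are not adjacent
  have notf12 : ¬G.Adj x1' x2' := by
    intro hf12
    obtain ⟨p, hp⟩ := hX2.1 x1' h1'X2
    obtain ⟨hpd, hpp⟩ : (p = x1' ∨ G.Adj x1' p) ∧
        ∀ u ∈ X2, u ≠ x1' → ¬(p = u ∨ G.Adj u p) := hp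
    have hpnX2 : p ∉ X2 := by
      intro hpX2
      by_cases hpx : p = x1'
      · refine hpp x2' h2'X2 (Ne.symm hne12') (Or.inr ?_)
        rw [hpx]
        exact hf12.symm
      · exact hpp p hpX2 hpx (Or.inl rfl)
    exact CYCLE x1' p h1'X2 hne12' hpd hpp hpnX2 (fun h => absurd rfl h)
  -- ### conclusion
  constructor
  · show ((x2 = x2' ∨ G.Adj x2' x2) ∧
      ∀ u ∈ X2, u ≠ x2' → ¬(x2 = u ∨ G.Adj u x2)) ∧ x2 ∉ X2
    refine ⟨⟨Or.inr ha2.symm, fun u hu hne => ?_⟩, hx2nX2⟩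
    rcases (memX2 u).mp hu with ⟨huX, h1, h2⟩ | h' | h'
    · rintro (h | hadj)
      · exact h2 h.symm
      · by_cases h3 : u = x3
        · rw [h3] at hadj
          exact note23 hadj.symm
        · exact hiso u huX h1 h2 h3 x2 hx2 hadj
    · rw [h']
      exact ndomf1 x2 hx2 (Ne.symm h12)
    · exact absurd h' hne
  · intro w hw hep
    by_contra hwne
    obtain ⟨z, hz⟩ := hep
    obtain ⟨⟨hzd, hzp⟩, hznX2⟩ : ((z = w ∨ G.Adj w z) ∧
        ∀ u ∈ X2, u ≠ w → ¬(z = u ∨ G.Adj u z)) ∧ z ∉ X2 := hz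
    exact (CYCLE w z hw hwne hzd hzp hznX2 (fun _ => notf12)).elim
end
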